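/- arXiv:1206.1269 — 5 statements merged into one kernel-verified Lean document; each statement's English description precedes it below -/
import Mathlib

section
/- The graph E_2^n (the complete multipartite graph with n parts each of size 2, i.e., K_{2n} minus a perfect matching) is n-choosable: for every assignment of lists of size n to its vertices, there is a proper coloring choosing each vertex's color from its list. -/
lemma aux : ∀ n (L : Fin n × Fin 2 → Finset ℕ), (∀ v, n ≤ (L v).card) →
    ∃ c : Fin n × Fin 2 → ℕ, (∀ v, c v ∈ L v) ∧ ∀ u v : Fin n × Fin 2, u.1 ≠ v.1 → c u ≠ c v := by
  intro n
  induction n with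
  | zero =>
    intro L hL
    exact ⟨fun v => v.1.elim0, fun v => v.1.elim0, fun u v _ => u.1.elim0⟩
  | succ m ih =>
    intro L hL
    by_cases hex : ∃ i : Fin (m+1), (L (i,0) ∩ L (i,1)).Nonempty
    · obtain ⟨i, x, hx⟩ := hex
      rw [Finset.mem_inter] at hx
      set L' : Fin m × Fin 2 → Finset ℕ := fun p => (L (i.succAbove p.1, p.2)).erase x with hL'
      obtain ⟨c', hc'mem, hc'prop⟩ := ih L' (by
        intro v
        have := hL (i.succAbove v.1, v.2)
        have h2 := Finset.pred_card_le_card_erase (s := L (i.succAbove v.1, v.2)) (a := x)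
        simp only [hL']
        omega)
      refine ⟨fun v => if h : v.1 = i then x else
        c' ((finSuccAboveEquiv i).symm ⟨v.1, h⟩, v.2), ?_, ?_⟩
      · intro v
        by_cases h : v.1 = i
        · obtain ⟨v1, v2⟩ := v
          simp only at h
          subst h
          simp only [dif_pos]
          fin_cases v2
          · exact hx.1
          · exact hx.2
        · simp only [h, dif_neg]
          have key : i.succAbove ((finSuccAboveEquiv i).symm ⟨v.1, h⟩) = v.1 := by
            have := (finSuccAboveEquiv i).apply_symm_apply ⟨v.1, h⟩
            rw [finSuccAboveEquiv_apply] at this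
            exact congrArg Subtype.val this
          have := hc'mem ((finSuccAboveEquiv i).symm ⟨v.1, h⟩, v.2)
          simp only [hL'] at this
          rw [key] at this
          exact Finset.mem_of_mem_erase (by simpa using this)
      · intro u v huv
        by_cases hu : u.1 = i <;> by_cases hv : v.1 = i
        · exact absurd (hu.trans hv.symm) huv
        · simp only [hu, hv, dif_pos, dif_neg]
          have := hc'mem ((finSuccAboveEquiv i).symm ⟨v.1, hv⟩, v.2)
          simp only [hL'] at this
          exact fun h => (Finset.ne_of_mem_erase this) h.symm
        · simp only [hu, hv, dif_pos, dif_neg]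
          have := hc'mem ((finSuccAboveEquiv i).symm ⟨u.1, hu⟩, u.2)
          simp only [hL'] at this
          exact Finset.ne_of_mem_erase this
        · simp only [hu, hv, dif_neg]
          apply hc'prop
          simp only [ne_eq]
          intro h
          apply huv
          have := congrArg (fun k => ((finSuccAboveEquiv i) k : Fin (m+1))) h
          simpa [finSuccAboveEquiv_apply] using this
    · push_neg at hex
      -- all pairs have disjoint lists: Hall
      have hall : ∀ s : Finset (Fin (m+1) × Fin 2), s.card ≤ (s.biUnion L).card := by
        intro s
        by_cases hs : s.card ≤ m + 1
        · rcases s.eq_empty_or_nonempty with rfl | ⟨v, hv⟩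
          · simp
          · calc s.card ≤ m + 1 := hs
              _ ≤ (L v).card := hL v
              _ ≤ (s.biUnion L).card := Finset.card_le_card (fun y hy =>
                  Finset.mem_biUnion.mpr ⟨v, hv, hy⟩)
        · push_neg at hs
          -- find a pair both of whose vertices are in s
          have hmap : ∀ v ∈ s, v.1 ∈ (Finset.univ : Finset (Fin (m+1))) := by simp
          obtain ⟨u, hu, v, hv, hne, heq⟩ :=
            Finset.exists_ne_map_eq_of_card_lt_of_maps_to (by simpa using hs) hmap
          have h2 : u.2 ≠ v.2 := fun h => hne (Prod.ext heq h)
          obtain ⟨u1, u2⟩ := u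
          obtain ⟨v1, v2⟩ := v
          simp only at heq h2
          subst heq
          have hboth : ((u1, 0) : Fin (m+1) × Fin 2) ∈ s ∧ ((u1, 1) : Fin (m+1) × Fin 2) ∈ s := by
            fin_cases u2 <;> fin_cases v2 <;> simp_all
          have hdisj : Disjoint (L (u1, 0)) (L (u1, 1)) := by
            rw [Finset.disjoint_iff_inter_eq_empty]
            exact hex u1
          have hsub : L (u1, 0) ∪ L (u1, 1) ⊆ s.biUnion L := by
            intro y hy
            rcases Finset.mem_union.mp hy with h | h
            · exact Finset.mem_biUnion.mpr ⟨_, hboth.1, h⟩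
            · exact Finset.mem_biUnion.mpr ⟨_, hboth.2, h⟩
          have hcard : 2 * (m + 1) ≤ (s.biUnion L).card := by
            have := Finset.card_le_card hsub
            rw [Finset.card_union_of_disjoint hdisj] at this
            have h0 := hL (u1, 0); have h1 := hL (u1, 1)
            omega
          have hs2 : s.card ≤ 2 * (m + 1) := by
            have := Finset.card_le_card (Finset.subset_univ s)
            simp [Fintype.card_prod] at this; omega
          omega
      obtain ⟨f, hfinj, hfmem⟩ :=
        (Finset.all_card_le_biUnion_card_iff_exists_injective L).mp hall
      exact ⟨f, hfmem, fun u v huv h => huv (congrArg Prod.fst (hfinj h))⟩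

/-- `E2n n` is the complete multipartite graph with `n` parts of size 2:
vertices are pairs `(i, j)` with `i : Fin n` the part, adjacent iff the parts differ.
This is `K_{2n}` minus a perfect matching. -/
def E2n (n : ℕ) : SimpleGraph (Fin n × Fin 2) where
  Adj u v := u.1 ≠ v.1
  symm := ⟨fun _ _ h => h.symm⟩
  loopless := ⟨fun _ h => h rfl⟩

/-- `E_2^n` is `n`-choosable. -/
theorem stmt0 (n : ℕ) (L : Fin n × Fin 2 → Finset ℕ)
    (hL : ∀ v, n ≤ (L v).card) :
    ∃ c : Fin n × Fin 2 → ℕ, (∀ v, c v ∈ L v) ∧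
      ∀ u v, (E2n n).Adj u v → c u ≠ c v := by
  obtain ⟨c, h1, h2⟩ := aux n L hL
  exact ⟨c, h1, fun u v huv => h2 u v huv⟩
end

section
/- Small Pot Lemma: Let G be a finite graph and f : V(G) → ℕ with f(v) < |V(G)| for all v. If G is not f-choosable, then G has a bad f-assignment L (an assignment with |L(v)| = f(v) for all v admitting no proper coloring from the lists) whose pot ⋃_{v} L(v) has fewer than |V(G)| colors. -/
/-- A list assignment `L` is good on `G` if there is a proper coloring from the lists. -/
def GoodList {V : Type*} (G : SimpleGraph V) (L : V → Finset ℕ) : Prop :=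
  ∃ c : V → ℕ, (∀ v, c v ∈ L v) ∧ ∀ u v, G.Adj u v → c u ≠ c v

/-- Small Pot Lemma. -/
theorem stmt1 {V : Type*} [Fintype V] [DecidableEq V] (G : SimpleGraph V)
    (f : V → ℕ) (hf : ∀ v, f v < Fintype.card V)
    (h : ¬ ∀ L : V → Finset ℕ, (∀ v, (L v).card = f v) → GoodList G L) :
    ∃ L : V → Finset ℕ, (∀ v, (L v).card = f v) ∧ ¬ GoodList G L ∧
      (Finset.univ.biUnion L).card < Fintype.card V := by
  classical
  push_neg at h
  obtain ⟨L, hLcard, hLbad⟩ := h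
  set n := Fintype.card V with hn
  -- Hall's condition must fail for the lists, else a rainbow SDR coloring is proper.
  have hhall : ¬ ∀ s : Finset V, s.card ≤ (s.biUnion L).card := by
    intro hh
    obtain ⟨g, hginj, hgmem⟩ :=
      (Finset.all_card_le_biUnion_card_iff_existsInjective' L).mp hh
    exact hLbad ⟨g, hgmem, fun u v huv he => (G.ne_of_adj huv) (hginj he)⟩
  push_neg at hhall
  obtain ⟨s₀, hs₀⟩ := hhall
  -- take a maximum-cardinality Hall violator S
  obtain ⟨S, hSmem, hSmax⟩ := Finset.exists_max_image
    (Finset.univ.filter fun s : Finset V => (s.biUnion L).card < s.card) Finset.card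
    ⟨s₀, by simpa using hs₀⟩
  rw [Finset.mem_filter] at hSmem
  have hSU : (S.biUnion L).card < S.card := hSmem.2
  by_cases hSuniv : S = Finset.univ
  · refine ⟨L, hLcard, hLbad, ?_⟩
    have : (Finset.univ.biUnion L).card < (Finset.univ : Finset V).card := by
      rw [← hSuniv]; exact hSU
    simpa [Finset.card_univ] using this
  · set U := S.biUnion L with hU
    have hScard : S.card < n := by
      have := Finset.card_lt_card ((Finset.subset_univ S).ssubset_of_ne hSuniv)
      simpa [Finset.card_univ] using this
    -- maximality of S
    have hmax : ∀ T : Finset V, S ⊂ T → T.card ≤ (T.biUnion L).card := by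
      intro T hT
      by_contra hc
      push_neg at hc
      have hle := hSmax T (Finset.mem_filter.mpr ⟨Finset.mem_univ _, hc⟩)
      exact absurd hle (not_le.mpr (Finset.card_lt_card hT))
    -- Hall's condition for the lists minus U, outside S
    have hhall2 : ∀ s : Finset {v // v ∉ S},
        s.card ≤ (s.biUnion fun v => L v.1 \ U).card := by
      intro s
      rcases s.eq_empty_or_nonempty with rfl | hs
      · simp
      · set T := s.image Subtype.val with hT
        have hTcard : T.card = s.card :=
          Finset.card_image_of_injective _ Subtype.val_injective
        have hTS : Disjoint S T := by
          rw [Finset.disjoint_right]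
          intro x hx
          obtain ⟨y, _, rfl⟩ := Finset.mem_image.mp hx
          exact y.2
        have hTne : T.Nonempty := hs.image _
        have hssub : S ⊂ S ∪ T := by
          obtain ⟨x, hx⟩ := hTne
          refine (Finset.ssubset_iff_of_subset Finset.subset_union_left).mpr
            ⟨x, Finset.mem_union_right _ hx, Finset.disjoint_right.mp hTS hx⟩
        have h1 : (S ∪ T).card ≤ ((S ∪ T).biUnion L).card := hmax _ hssub
        have h2 : (S ∪ T).card = S.card + T.card := Finset.card_union_of_disjoint hTS
        have h3 : (S ∪ T).biUnion L ⊆ U ∪ (T.biUnion L \ U) := by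
          intro x hx
          by_cases hxU : x ∈ U
          · exact Finset.mem_union_left _ hxU
          · rw [Finset.mem_biUnion] at hx
            obtain ⟨v, hv, hxv⟩ := hx
            rcases Finset.mem_union.mp hv with hvS | hvT
            · exact absurd (Finset.mem_biUnion.mpr ⟨v, hvS, hxv⟩) hxU
            · exact Finset.mem_union_right _
                (Finset.mem_sdiff.mpr ⟨Finset.mem_biUnion.mpr ⟨v, hvT, hxv⟩, hxU⟩)
        have h4 : ((S ∪ T).biUnion L).card ≤ U.card + (T.biUnion L \ U).card :=
          (Finset.card_le_card h3).trans (Finset.card_union_le _ _)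
        have h5 : (s.biUnion fun v => L v.1 \ U) = T.biUnion L \ U := by
          ext x
          simp only [Finset.mem_biUnion, Finset.mem_sdiff, hT, Finset.mem_image]
          constructor
          · rintro ⟨v, hv, hx, hxU⟩
            exact ⟨⟨v.1, ⟨v, hv, rfl⟩, hx⟩, hxU⟩
          · rintro ⟨⟨w, ⟨v, hv, rfl⟩, hx⟩, hxU⟩
            exact ⟨v, hv, hx, hxU⟩
        rw [h5]
        omega
    obtain ⟨r, hrinj, hrmem⟩ :=
      (Finset.all_card_le_biUnion_card_iff_existsInjective'
        (fun v : {v // v ∉ S} => L v.1 \ U)).mp hhall2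
    -- fresh colors
    set P := Finset.univ.biUnion L with hP
    set m := P.sup id + 1 with hm
    have hPm : ∀ x ∈ P, x < m := fun x hx =>
      Nat.lt_succ_of_le (Finset.le_sup (f := id) hx)
    set W := (Finset.range (n - 1 - U.card)).image (fun i => m + i) with hW
    have hWcard : W.card = n - 1 - U.card := by
      rw [hW, Finset.card_image_of_injective _ (add_right_injective m),
        Finset.card_range]
    have hWP : ∀ x ∈ W, x ∉ P := by
      intro x hx hxP
      obtain ⟨i, _, rfl⟩ := Finset.mem_image.mp hx
      have := hPm _ hxP
      omega
    have hsubP : ∀ v : V, L v ⊆ P := by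
      intro v x hx
      exact Finset.mem_biUnion.mpr ⟨v, Finset.mem_univ _, hx⟩
    have hUP : U ⊆ P := by
      intro x hx
      obtain ⟨v, _, hxv⟩ := Finset.mem_biUnion.mp hx
      exact hsubP v hxv
    have hUW : Disjoint U W := Finset.disjoint_left.mpr fun x hx hxW => hWP x hxW (hUP hx)
    set C := U ∪ W with hC
    have hCcard : C.card = n - 1 := by
      rw [hC, Finset.card_union_of_disjoint hUW, hWcard]
      omega
    -- new lists outside S
    have hBex : ∀ v : {v // v ∉ S},
        ∃ B : Finset ℕ, (L v.1 ∩ U) ⊆ B ∧ B ⊆ C ∧ B.card = f v.1 := by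
      intro v
      have h1 : (L v.1 ∩ U) ⊆ C := Finset.inter_subset_right.trans Finset.subset_union_left
      have h2 : (L v.1 ∩ U).card ≤ f v.1 := by
        rw [← hLcard v.1]
        exact Finset.card_le_card Finset.inter_subset_left
      have h3 : f v.1 ≤ C.card := by
        rw [hCcard]
        have := hf v.1
        omega
      exact Finset.exists_subsuperset_card_eq h1 h2 h3
    choose B hB1 hB2 hB3 using hBex
    set L' : V → Finset ℕ := fun v => if h : v ∈ S then L v else B ⟨v, h⟩ with hL'
    have hL'card : ∀ v, (L' v).card = f v := by
      intro v
      by_cases hv : v ∈ S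
      · simp [hL', hv, hLcard v]
      · simp [hL', hv, hB3 ⟨v, hv⟩]
    refine ⟨L', hL'card, ?_, ?_⟩
    · -- L' is bad
      rintro ⟨c', hmem', hprop'⟩
      apply hLbad
      set c : V → ℕ := fun v =>
        if h : v ∈ S then c' v else if c' v ∈ L v then c' v else r ⟨v, h⟩ with hc
      have key : ∀ w : V, (c w = c' w ∧ c w ∈ U) ∨
          (∃ hw : w ∉ S, c w = r ⟨w, hw⟩ ∧ c w ∉ U) := by
        intro w
        by_cases hw : w ∈ S
        · left
          have hcw : c w = c' w := by simp [hc, hw]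
          have hmem : c' w ∈ L w := by
            have := hmem' w
            simpa [hL', hw] using this
          exact ⟨hcw, by rw [hcw]; exact Finset.mem_biUnion.mpr ⟨w, hw, hmem⟩⟩
        · by_cases hcw : c' w ∈ L w
          · left
            have hcc : c w = c' w := by simp [hc, hw, hcw]
            have hmem : c' w ∈ B ⟨w, hw⟩ := by
              have := hmem' w
              simpa [hL', hw] using this
            have hCmem : c' w ∈ C := hB2 _ hmem
            have : c' w ∈ U := by
              rcases Finset.mem_union.mp hCmem with h | h
              · exact h
              · exact absurd (hsubP w hcw) (hWP _ h)
            exact ⟨hcc, by rw [hcc]; exact this⟩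
          · right
            refine ⟨hw, by simp [hc, hw, hcw], ?_⟩
            have : c w = r ⟨w, hw⟩ := by simp [hc, hw, hcw]
            rw [this]
            exact (Finset.mem_sdiff.mp (hrmem ⟨w, hw⟩)).2
      refine ⟨c, ?_, ?_⟩
      · intro v
        by_cases hv : v ∈ S
        · have hmem : c' v ∈ L v := by
            have := hmem' v
            simpa [hL', hv] using this
          simpa [hc, hv] using hmem
        · by_cases hcv : c' v ∈ L v
          · simp [hc, hv, hcv]
          · have : r ⟨v, hv⟩ ∈ L v := (Finset.mem_sdiff.mp (hrmem ⟨v, hv⟩)).1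
            simpa [hc, hv, hcv] using this
      · intro u v huv heq
        have hne : u ≠ v := G.ne_of_adj huv
        rcases key u with ⟨hu1, hu2⟩ | ⟨hu, hu1, hu2⟩ <;>
          rcases key v with ⟨hv1, hv2⟩ | ⟨hv, hv1, hv2⟩
        · exact hprop' u v huv (by rw [← hu1, ← hv1, heq])
        · exact hv2 (heq ▸ hu2)
        · exact hu2 (heq.symm ▸ hv2)
        · have : r ⟨u, hu⟩ = r ⟨v, hv⟩ := by rw [← hu1, ← hv1, heq]
          have := hrinj this
          exact hne (congrArg Subtype.val this)
    · -- small pot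
      have hpot : Finset.univ.biUnion L' ⊆ C := by
        intro x hx
        obtain ⟨v, _, hxv⟩ := Finset.mem_biUnion.mp hx
        by_cases hv : v ∈ S
        · have : x ∈ L v := by simpa [hL', hv] using hxv
          exact Finset.mem_union_left _ (Finset.mem_biUnion.mpr ⟨v, hv, this⟩)
        · exact hB2 ⟨v, hv⟩ (by simpa [hL', hv] using hxv)
      have h1 : (Finset.univ.biUnion L').card ≤ n - 1 := by
        rw [← hCcard]
        exact Finset.card_le_card hpot
      omega
end

section
/- Let G be a graph, f : V(G) → ℕ, suppose G is not f-choosable, and let L be a bad f-assignment minimizing |Pot(L)|. Then for every color c ∈ Pot(L), there is a connected component H of the subgraph G_c induced by the vertices whose lists contain c such that Pot_H(L) = Pot(L). In particular, the union of the lists over all vertices of G_c equals Pot(L). -/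
/-- The subgraph of `G` induced (as a spanning subgraph with extra isolated vertices)
by the vertices satisfying `P`. -/
def restrict {V : Type*} (G : SimpleGraph V) (P : V → Prop) : SimpleGraph V where
  Adj a b := G.Adj a b ∧ P a ∧ P b
  symm := ⟨fun _ _ ⟨h, ha, hb⟩ => ⟨h.symm, hb, ha⟩⟩
  loopless := ⟨fun _ ⟨h, _⟩ => G.irrefl h⟩

/-- If `L` is a bad `f`-assignment minimizing the pot, then for every color `c` in the pot
there is a connected component of `G_c` whose lists together cover the whole pot.
In particular the lists over all of `G_c` cover the whole pot. -/
theorem stmt2 {V : Type*} [Fintype V] [DecidableEq V] (G : SimpleGraph V) (f : V → ℕ)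
    (L : V → Finset ℕ) (hsize : ∀ v, (L v).card = f v) (hbad : ¬ GoodList G L)
    (hmin : ∀ L' : V → Finset ℕ, (∀ v, (L' v).card = f v) → ¬ GoodList G L' →
      (Finset.univ.biUnion L).card ≤ (Finset.univ.biUnion L').card) :
    ∀ c ∈ Finset.univ.biUnion L,
      (∃ v, c ∈ L v ∧
        (⋃ w ∈ {w | (restrict G (fun x => c ∈ L x)).Reachable v w}, (L w : Set ℕ)) =
          ⋃ u, (L u : Set ℕ)) ∧
      (⋃ w ∈ {w | c ∈ L w}, (L w : Set ℕ)) = ⋃ u, (L u : Set ℕ) := by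
  classical
  intro c hc
  set Gc := restrict G (fun x => c ∈ L x) with hGcdef
  set Pot := Finset.univ.biUnion L with hPotdef
  have hGcAdj : ∀ a b, Gc.Adj a b ↔ G.Adj a b ∧ c ∈ L a ∧ c ∈ L b := fun a b => Iff.rfl
  -- reachability preserves membership of c
  have hreach : ∀ v w, Gc.Reachable v w → c ∈ L v → c ∈ L w := by
    intro v w h
    obtain ⟨p⟩ := h
    induction p with
    | nil => exact id
    | cons h p ih => exact fun _ => ih h.2.2
  -- PH v : pot of the component of v
  set PH : V → Finset ℕ :=
    fun v => (Finset.univ.filter (fun w => Gc.Reachable v w)).biUnion L with hPHdef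
  have hself : ∀ v, L v ⊆ PH v := by
    intro v x hx
    exact Finset.mem_biUnion.2 ⟨v, Finset.mem_filter.2 ⟨Finset.mem_univ v, SimpleGraph.Reachable.refl v⟩, hx⟩
  have hPHsub : ∀ v, PH v ⊆ Pot := by
    intro v x hx
    obtain ⟨w, _, hw⟩ := Finset.mem_biUnion.1 hx
    exact Finset.mem_biUnion.2 ⟨w, Finset.mem_univ w, hw⟩
  have hPHeq : ∀ u v, Gc.Reachable u v → PH u = PH v := by
    intro u v h
    simp only [hPHdef]
    congr 1
    ext w
    simp only [Finset.mem_filter, Finset.mem_univ, true_and]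
    exact ⟨fun h' => h.symm.trans h', fun h' => h.trans h'⟩
  -- the key claim
  have key : ∃ v, c ∈ L v ∧ PH v = Pot := by
    by_contra hcon
    push_neg at hcon
    -- choose a missing color for each component
    set d : V → ℕ :=
      fun v => if hne : (Pot \ PH v).Nonempty then (Pot \ PH v).min' hne else 0 with hddef
    have hdmem : ∀ v, c ∈ L v → d v ∈ Pot ∧ d v ∉ PH v := by
      intro v hv
      have hne : (Pot \ PH v).Nonempty := by
        rw [Finset.sdiff_nonempty]
        intro hsub
        exact hcon v hv (le_antisymm (hPHsub v) hsub)
      have := Finset.min'_mem _ hne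
      rw [Finset.mem_sdiff] at this
      simp only [hddef, dif_pos hne]
      exact this
    have hdne : ∀ v, c ∈ L v → d v ≠ c := by
      intro v hv h
      exact (hdmem v hv).2 (h ▸ hself v hv)
    have hdnotmem : ∀ v, c ∈ L v → d v ∉ L v := fun v hv h => (hdmem v hv).2 (hself v h)
    have hdeq : ∀ u v, Gc.Reachable u v → d u = d v := by
      intro u v h
      simp only [hddef, hPHeq u v h]
    -- the modified assignment
    set L' : V → Finset ℕ :=
      fun v => if c ∈ L v then insert (d v) ((L v).erase c) else L v with hL'def
    have hcnotin : ∀ v, c ∉ L' v := by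
      intro v
      simp only [hL'def]
      by_cases hv : c ∈ L v
      · rw [if_pos hv, Finset.mem_insert]
        rintro (h | h)
        · exact hdne v hv h.symm
        · exact (Finset.mem_erase.1 h).1 rfl
      · rw [if_neg hv]; exact hv
    have hcard : ∀ v, (L' v).card = f v := by
      intro v
      simp only [hL'def]
      by_cases hv : c ∈ L v
      · rw [if_pos hv, Finset.card_insert_of_notMem
          (fun h => hdnotmem v hv (Finset.mem_erase.1 h).2),
          Finset.card_erase_of_mem hv]
        have h1 : 1 ≤ (L v).card := Finset.card_pos.2 ⟨c, hv⟩
        rw [← hsize v]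
        omega
      · rw [if_neg hv]; exact hsize v
    have hbad' : ¬ GoodList G L' := by
      rintro ⟨col, hcol, hproper⟩
      apply hbad
      refine ⟨fun v => if c ∈ L v ∧ col v = d v then c else col v, ?_, ?_⟩
      · intro v
        by_cases h : c ∈ L v ∧ col v = d v
        · simp only [if_pos h]; exact h.1
        · simp only [if_neg h]
          have := hcol v
          simp only [hL'def] at this
          by_cases hv : c ∈ L v
          · rw [if_pos hv, Finset.mem_insert] at this
            rcases this with h' | h'
            · exact absurd ⟨hv, h'⟩ h
            · exact (Finset.mem_erase.1 h').2
          · rwa [if_neg hv] at this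
      · intro u v huv heq
        simp only [] at heq
        by_cases hu : c ∈ L u ∧ col u = d u <;> by_cases hv : c ∈ L v ∧ col v = d v
        · -- both replaced by c : same component
          have hr : Gc.Reachable u v := SimpleGraph.Adj.reachable ⟨huv, hu.1, hv.1⟩
          have : col u = col v := by rw [hu.2, hv.2, hdeq u v hr]
          exact hproper u v huv this
        · simp only [if_pos hu, if_neg hv] at heq
          have : col v ∈ L' v := hcol v
          rw [← heq] at this
          exact hcnotin v this
        · simp only [if_neg hu, if_pos hv] at heq
          have : col u ∈ L' u := hcol u
          rw [heq] at this
          exact hcnotin u this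
        · simp only [if_neg hu, if_neg hv] at heq
          exact hproper u v huv heq
    have hsub' : Finset.univ.biUnion L' ⊆ Pot.erase c := by
      intro x hx
      obtain ⟨v, _, hxv⟩ := Finset.mem_biUnion.1 hx
      rw [Finset.mem_erase]
      constructor
      · rintro rfl; exact hcnotin v hxv
      · simp only [hL'def] at hxv
        by_cases hv : c ∈ L v
        · rw [if_pos hv, Finset.mem_insert] at hxv
          rcases hxv with h | h
          · exact h ▸ (hdmem v hv).1
          · exact hPHsub v (hself v (Finset.mem_erase.1 h).2)
        · rw [if_neg hv] at hxv
          exact Finset.mem_biUnion.2 ⟨v, Finset.mem_univ v, hxv⟩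
    have h1 : Pot.card ≤ (Finset.univ.biUnion L').card := hmin L' hcard hbad'
    have h2 : (Finset.univ.biUnion L').card ≤ (Pot.erase c).card := Finset.card_le_card hsub'
    have h3 : (Pot.erase c).card < Pot.card := Finset.card_erase_lt_of_mem hc
    omega
  obtain ⟨v, hv, hveq⟩ := key
  constructor
  · refine ⟨v, hv, ?_⟩
    ext x
    simp only [Set.mem_iUnion, Set.mem_setOf_eq, Finset.mem_coe, exists_prop]
    constructor
    · rintro ⟨w, _, hx⟩; exact ⟨w, hx⟩
    · rintro ⟨u, hx⟩
      have hxp : x ∈ PH v := hveq ▸ (Finset.mem_biUnion.2 ⟨u, Finset.mem_univ u, hx⟩)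
      obtain ⟨w, hw, hxw⟩ := Finset.mem_biUnion.1 hxp
      exact ⟨w, (Finset.mem_filter.1 hw).2, hxw⟩
  · ext x
    simp only [Set.mem_iUnion, Set.mem_setOf_eq, Finset.mem_coe, exists_prop]
    constructor
    · rintro ⟨w, _, hx⟩; exact ⟨w, hx⟩
    · rintro ⟨u, hx⟩
      have hxp : x ∈ PH v := hveq ▸ (Finset.mem_biUnion.2 ⟨u, Finset.mem_univ u, hx⟩)
      obtain ⟨w, hw, hxw⟩ := Finset.mem_biUnion.1 hxp
      exact ⟨w, hreach v w (Finset.mem_filter.1 hw).2 hv, hxw⟩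
end

section
/- The join of the complete graph K_1 with the graph N_6 is d_1-choosable, where N_6 is the graph on vertices x_1,...,x_5,y with x_1x_2x_3x_4x_5x_1 an induced 5-cycle and y adjacent exactly to x_1, x_2, x_3, x_4. -/
/-- Degree via the cardinality of the neighbor set. -/
noncomputable def deg {α : Type*} (G : SimpleGraph α) (v : α) : ℕ :=
  (G.neighborSet v).ncard

/-- `K_1 * N_6`: vertices `0,…,4` are `x_1,…,x_5` forming an induced 5-cycle,
vertex `5` is `y`, adjacent exactly to `x_1,x_2,x_3,x_4`, and vertex `6` is the `K_1`,
joined to everything. -/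
def K1N6 : SimpleGraph (Fin 7) :=
  SimpleGraph.fromRel (fun u v => (u, v) ∈
    [((0 : Fin 7), (1 : Fin 7)), (1,2), (2,3), (3,4), (4,0),
     (5,0), (5,1), (5,2), (5,3),
     (6,0), (6,1), (6,2), (6,3), (6,4), (6,5)])

instance : DecidableRel K1N6.Adj := fun u v =>
  decidable_of_iff _ (SimpleGraph.fromRel_adj _ u v).symm

def GOOD (L : Fin 7 → Finset ℕ) : Prop :=
  ∃ c : Fin 7 → ℕ, (∀ v, c v ∈ L v) ∧ ∀ u v, K1N6.Adj u v → c u ≠ c v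

lemma build {L : Fin 7 → Finset ℕ} (c0 c1 c2 c3 c4 c5 c6 : ℕ)
    (m0 : c0 ∈ L 0) (m1 : c1 ∈ L 1) (m2 : c2 ∈ L 2) (m3 : c3 ∈ L 3)
    (m4 : c4 ∈ L 4) (m5 : c5 ∈ L 5) (m6 : c6 ∈ L 6)
    (e01 : c0 ≠ c1) (e12 : c1 ≠ c2) (e23 : c2 ≠ c3) (e34 : c3 ≠ c4) (e40 : c4 ≠ c0)
    (e50 : c5 ≠ c0) (e51 : c5 ≠ c1) (e52 : c5 ≠ c2) (e53 : c5 ≠ c3)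
    (e60 : c6 ≠ c0) (e61 : c6 ≠ c1) (e62 : c6 ≠ c2) (e63 : c6 ≠ c3)
    (e64 : c6 ≠ c4) (e65 : c6 ≠ c5) : GOOD L := by
  refine ⟨![c0,c1,c2,c3,c4,c5,c6], ?_, ?_⟩
  · intro v; fin_cases v <;> simpa
  · intro u v h
    fin_cases u <;> fin_cases v <;>
      first
        | exact absurd h (by decide)
        | (simp only [Matrix.cons_val_zero, Matrix.cons_val_one, Matrix.head_cons,
            Matrix.cons_val_two, Matrix.tail_cons, Matrix.cons_val_three,
            Matrix.cons_val_four, Matrix.cons_val_succ]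
           first | assumption | (symm; assumption))

lemma pick_gen (S T : Finset ℕ) (h : T.card < S.card) : ∃ x ∈ S, x ∉ T := by
  by_contra hc
  push_neg at hc
  exact absurd (Finset.card_le_card hc) (not_le.2 h)

lemma card2 (a b : ℕ) : ({a, b} : Finset ℕ).card ≤ 2 :=
  (Finset.card_insert_le _ _).trans (by simp)

lemma card3 (a b c : ℕ) : ({a, b, c} : Finset ℕ).card ≤ 3 := by
  have := Finset.card_insert_le a ({b, c} : Finset ℕ)
  have := card2 b c; omega

lemma card4 (a b c d : ℕ) : ({a, b, c, d} : Finset ℕ).card ≤ 4 := by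
  have := Finset.card_insert_le a ({b, c, d} : Finset ℕ)
  have := card3 b c d; omega

lemma pick1 (S : Finset ℕ) (h : 1 ≤ S.card) : ∃ x, x ∈ S := by
  obtain ⟨x, hx, -⟩ := pick_gen S ∅ (by simpa using h); exact ⟨x, hx⟩

lemma pick2 (S : Finset ℕ) (a : ℕ) (h : 2 ≤ S.card) : ∃ x ∈ S, x ≠ a := by
  obtain ⟨x, hx, hx2⟩ := pick_gen S {a} (by simp; omega)
  exact ⟨x, hx, by simpa using hx2⟩

lemma pick3 (S : Finset ℕ) (a b : ℕ) (h : 3 ≤ S.card) : ∃ x ∈ S, x ≠ a ∧ x ≠ b := by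
  obtain ⟨x, hx, hx2⟩ := pick_gen S {a, b} (by have := card2 a b; omega)
  simp only [Finset.mem_insert, Finset.mem_singleton, not_or] at hx2
  exact ⟨x, hx, hx2⟩

lemma pick4 (S : Finset ℕ) (a b c : ℕ) (h : 4 ≤ S.card) : ∃ x ∈ S, x ≠ a ∧ x ≠ b ∧ x ≠ c := by
  obtain ⟨x, hx, hx2⟩ := pick_gen S {a, b, c} (by have := card3 a b c; omega)
  simp only [Finset.mem_insert, Finset.mem_singleton, not_or] at hx2
  exact ⟨x, hx, hx2.1, hx2.2⟩

lemma pick5 (S : Finset ℕ) (a b c d : ℕ) (h : 5 ≤ S.card) :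
    ∃ x ∈ S, x ≠ a ∧ x ≠ b ∧ x ≠ c ∧ x ≠ d := by
  obtain ⟨x, hx, hx2⟩ := pick_gen S {a, b, c, d} (by have := card4 a b c d; omega)
  simp only [Finset.mem_insert, Finset.mem_singleton, not_or] at hx2
  exact ⟨x, hx, hx2.1, hx2.2.1, hx2.2.2⟩

lemma mem_of_small_erase {s : Finset ℕ} {a : ℕ} (h : (s.erase a).card < s.card) : a ∈ s := by
  by_contra hc; rw [Finset.erase_eq_of_notMem hc] at h; omega

lemma subset_trick {A C W : Finset ℕ} (hAW : A ⊆ W) (hCW : C ⊆ W)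
    (hdisj : ∀ x, x ∈ A → x ∈ C → False) (hA : 2 ≤ A.card) (hC : 2 ≤ C.card)
    (hW : W.card = 4) :
    A.card = 2 ∧ C.card = 2 ∧ ∀ x ∈ W, x ∈ A ∨ x ∈ C := by
  have hd : Disjoint A C := Finset.disjoint_left.2 fun {x} h h' => (hdisj x h h').elim
  have hu : (A ∪ C).card = A.card + C.card := Finset.card_union_of_disjoint hd
  have hsub : A ∪ C ⊆ W := Finset.union_subset hAW hCW
  have hle : (A ∪ C).card ≤ 4 := hW ▸ Finset.card_le_card hsub
  have heq : A ∪ C = W := Finset.eq_of_subset_of_card_le hsub (by omega)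
  exact ⟨by omega, by omega, fun x hx => Finset.mem_union.1 (heq ▸ hx)⟩

def mir : Fin 7 → Fin 7 := ![3,2,1,0,4,5,6]

lemma mir_mir : ∀ v, mir (mir v) = v := by decide

lemma adj_mir : ∀ u v, K1N6.Adj u v → K1N6.Adj (mir u) (mir v) := by decide

lemma good_mirror (L : Fin 7 → Finset ℕ) (h : GOOD (fun i => L (mir i))) : GOOD L := by
  obtain ⟨c, hm, hp⟩ := h
  refine ⟨fun v => c (mir v), fun v => ?_, fun u v huv => hp _ _ (adj_mir u v huv)⟩
  have h2 := hm (mir v)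
  simp only [] at h2
  rwa [mir_mir v] at h2
lemma case1 (L : Fin 7 → Finset ℕ)
    (n0 : (L 0).card = 3) (n1 : (L 1).card = 3) (n2 : (L 2).card = 3)
    (n3 : (L 3).card = 3) (n4 : (L 4).card = 2) (n5 : (L 5).card = 4)
    (n6 : (L 6).card = 5)
    (c : ℕ) (hc4 : c ∈ L 4) (hc5 : c ∈ L 5) : GOOD L := by
  by_cases H11 : ∃ e, e ∈ L 0 ∧ e ∈ L 2 ∧ e ≠ c
  · obtain ⟨e, he0, he2, hec⟩ := H11
    obtain ⟨x1, hx1, hx1c, hx1e⟩ := pick3 (L 1) c e (by omega)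
    obtain ⟨x3, hx3, hx3c, hx3e⟩ := pick3 (L 3) c e (by omega)
    obtain ⟨z, hz, hzc, hze, hzx1, hzx3⟩ := pick5 (L 6) c e x1 x3 (by omega)
    exact build e x1 e x3 c c z he0 hx1 he2 hx3 hc4 hc5 hz
      hx1e.symm hx1e hx3e.symm hx3c hec.symm hec.symm hx1c.symm hec.symm hx3c.symm
      hze hzx1 hze hzx3 hzc hzc
  by_cases H12 : ∃ e, e ∈ L 1 ∧ e ∈ L 3 ∧ e ≠ c
  · obtain ⟨e, he1, he3, hec⟩ := H12
    obtain ⟨x0, hx0, hx0c, hx0e⟩ := pick3 (L 0) c e (by omega)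
    obtain ⟨x2, hx2, hx2c, hx2e⟩ := pick3 (L 2) c e (by omega)
    obtain ⟨z, hz, hzc, hze, hzx0, hzx2⟩ := pick5 (L 6) c e x0 x2 (by omega)
    exact build x0 e x2 e c c z hx0 he1 hx2 he3 hc4 hc5 hz
      hx0e hx2e.symm hx2e hec hx0c.symm hx0c.symm hec.symm hx2c.symm hec.symm
      hzx0 hze hzx2 hze hzc hzc
  by_cases H13 : ∃ e, e ∈ L 0 ∧ e ∉ L 6 ∧ e ≠ c
  · obtain ⟨e, he0, he6, hec⟩ := H13
    obtain ⟨x1, hx1, hx1c, hx1e⟩ := pick3 (L 1) c e (by omega)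
    obtain ⟨x2, hx2, hx2c, hx2x1⟩ := pick3 (L 2) c x1 (by omega)
    obtain ⟨x3, hx3, hx3c, hx3x2⟩ := pick3 (L 3) c x2 (by omega)
    obtain ⟨z, hz, hzc, hzx1, hzx2, hzx3⟩ := pick5 (L 6) c x1 x2 x3 (by omega)
    exact build e x1 x2 x3 c c z he0 hx1 hx2 hx3 hc4 hc5 hz
      hx1e.symm hx2x1.symm hx3x2.symm hx3c hec.symm hec.symm hx1c.symm hx2c.symm hx3c.symm
      (ne_of_mem_of_not_mem hz he6) hzx1 hzx2 hzx3 hzc hzc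
  by_cases H14 : ∃ e, e ∈ L 1 ∧ e ∉ L 6 ∧ e ≠ c
  · obtain ⟨e, he1, he6, hec⟩ := H14
    obtain ⟨x0, hx0, hx0c, hx0e⟩ := pick3 (L 0) c e (by omega)
    obtain ⟨x2, hx2, hx2c, hx2e⟩ := pick3 (L 2) c e (by omega)
    obtain ⟨x3, hx3, hx3c, hx3x2⟩ := pick3 (L 3) c x2 (by omega)
    obtain ⟨z, hz, hzc, hzx0, hzx2, hzx3⟩ := pick5 (L 6) c x0 x2 x3 (by omega)
    exact build x0 e x2 x3 c c z hx0 he1 hx2 hx3 hc4 hc5 hz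
      hx0e hx2e.symm hx3x2.symm hx3c hx0c.symm hx0c.symm hec.symm hx2c.symm hx3c.symm
      hzx0 (ne_of_mem_of_not_mem hz he6) hzx2 hzx3 hzc hzc
  by_cases H15 : ∃ e, e ∈ L 2 ∧ e ∉ L 6 ∧ e ≠ c
  · obtain ⟨e, he2, he6, hec⟩ := H15
    obtain ⟨x3, hx3, hx3c, hx3e⟩ := pick3 (L 3) c e (by omega)
    obtain ⟨x1, hx1, hx1c, hx1e⟩ := pick3 (L 1) c e (by omega)
    obtain ⟨x0, hx0, hx0c, hx0x1⟩ := pick3 (L 0) c x1 (by omega)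
    obtain ⟨z, hz, hzc, hzx0, hzx1, hzx3⟩ := pick5 (L 6) c x0 x1 x3 (by omega)
    exact build x0 x1 e x3 c c z hx0 hx1 he2 hx3 hc4 hc5 hz
      hx0x1 hx1e hx3e.symm hx3c hx0c.symm hx0c.symm hx1c.symm hec.symm hx3c.symm
      hzx0 hzx1 (ne_of_mem_of_not_mem hz he6) hzx3 hzc hzc
  by_cases H16 : ∃ e, e ∈ L 3 ∧ e ∉ L 6 ∧ e ≠ c
  · obtain ⟨e, he3, he6, hec⟩ := H16
    obtain ⟨x2, hx2, hx2c, hx2e⟩ := pick3 (L 2) c e (by omega)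
    obtain ⟨x1, hx1, hx1c, hx1x2⟩ := pick3 (L 1) c x2 (by omega)
    obtain ⟨x0, hx0, hx0c, hx0x1⟩ := pick3 (L 0) c x1 (by omega)
    obtain ⟨z, hz, hzc, hzx0, hzx1, hzx2⟩ := pick5 (L 6) c x0 x1 x2 (by omega)
    exact build x0 x1 x2 e c c z hx0 hx1 hx2 he3 hc4 hc5 hz
      hx0x1 hx1x2 hx2e hec hx0c.symm hx0c.symm hx1c.symm hx2c.symm hec.symm
      hzx0 hzx1 hzx2 (ne_of_mem_of_not_mem hz he6) hzc hzc
  by_cases H17 : c ∉ L 6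
  · obtain ⟨x0, hx0, hx0c⟩ := pick2 (L 0) c (by omega)
    obtain ⟨x1, hx1, hx1c, hx1x0⟩ := pick3 (L 1) c x0 (by omega)
    obtain ⟨x2, hx2, hx2c, hx2x1⟩ := pick3 (L 2) c x1 (by omega)
    obtain ⟨x3, hx3, hx3c, hx3x2⟩ := pick3 (L 3) c x2 (by omega)
    obtain ⟨z, hz, hzx0, hzx1, hzx2, hzx3⟩ := pick5 (L 6) x0 x1 x2 x3 (by omega)
    exact build x0 x1 x2 x3 c c z hx0 hx1 hx2 hx3 hc4 hc5 hz
      hx1x0.symm hx2x1.symm hx3x2.symm hx3c hx0c.symm hx0c.symm hx1c.symm hx2c.symm hx3c.symm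
      hzx0 hzx1 hzx2 hzx3 (ne_of_mem_of_not_mem hz H17) (ne_of_mem_of_not_mem hz H17)
  -- structural case
  push_neg at H11 H12 H13 H14 H15 H16 H17
  have hWcard : ((L 6).erase c).card = 4 := by
    rw [Finset.card_erase_of_mem H17, n6]
  have hAW : (L 0).erase c ⊆ (L 6).erase c := by
    intro x hx
    rcases Finset.mem_erase.1 hx with ⟨hxc, hx0⟩
    exact Finset.mem_erase.2 ⟨hxc, by_contra fun h6 => hxc (H13 x hx0 h6)⟩
  have hCW : (L 2).erase c ⊆ (L 6).erase c := by
    intro x hx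
    rcases Finset.mem_erase.1 hx with ⟨hxc, hx2⟩
    exact Finset.mem_erase.2 ⟨hxc, by_contra fun h6 => hxc (H15 x hx2 h6)⟩
  have hA2 : 2 ≤ ((L 0).erase c).card := by
    have h := Finset.pred_card_le_card_erase (a := c) (s := L 0); omega
  have hC2 : 2 ≤ ((L 2).erase c).card := by
    have h := Finset.pred_card_le_card_erase (a := c) (s := L 2); omega
  obtain ⟨hAc, hCc, pAC⟩ := subset_trick hAW hCW
    (fun x hx hx' => (Finset.mem_erase.1 hx).1
      (H11 x (Finset.mem_erase.1 hx).2 (Finset.mem_erase.1 hx').2)) hA2 hC2 hWcard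
  have hc0 : c ∈ L 0 := mem_of_small_erase (by omega)
  have hc2 : c ∈ L 2 := mem_of_small_erase (by omega)
  by_cases HF : ∃ f, f ∈ L 5 ∧ f ∉ L 6
  · obtain ⟨f, hf5, hf6⟩ := HF
    obtain ⟨t, ht4, htc⟩ := pick2 (L 4) c (by omega)
    obtain ⟨x1, hx1, hx1c, hx1f⟩ := pick3 (L 1) c f (by omega)
    obtain ⟨x3, hx3, hx3c, hx3t⟩ := pick3 (L 3) c t (by omega)
    have hx36 : x3 ∈ L 6 := by_contra fun h => hx3c (H16 x3 hx3 h)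
    have hx3f : x3 ≠ f := ne_of_mem_of_not_mem hx36 hf6
    obtain ⟨z, hz, hzc, hzx1, hzx3, hzt⟩ := pick5 (L 6) c x1 x3 t (by omega)
    exact build c x1 c x3 t f z hc0 hx1 hc2 hx3 ht4 hf5 hz
      hx1c.symm hx1c hx3c.symm hx3t htc
      (ne_of_mem_of_not_mem H17 hf6).symm hx1f.symm (ne_of_mem_of_not_mem H17 hf6).symm hx3f.symm
      hzc hzx1 hzc hzx3 hzt (ne_of_mem_of_not_mem hz hf6)
  push_neg at HF
  by_cases HT : ∃ t, t ∈ L 4 ∧ t ∉ L 6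
  · obtain ⟨t, ht4, ht6⟩ := HT
    have htc : t ≠ c := fun h => ht6 (h ▸ H17)
    obtain ⟨x3, hx3, hx3c, hx3t⟩ := pick3 (L 3) c t (by omega)
    obtain ⟨x1, hx1, hx1c⟩ := pick2 (L 1) c (by omega)
    obtain ⟨x5, hx5, hx5c, hx5x1, hx5x3⟩ := pick4 (L 5) c x1 x3 (by omega)
    obtain ⟨z, hz, hzc, hzx1, hzx3, hzx5⟩ := pick5 (L 6) c x1 x3 x5 (by omega)
    exact build c x1 c x3 t x5 z hc0 hx1 hc2 hx3 ht4 hx5 hz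
      hx1c.symm hx1c hx3c.symm hx3t htc
      hx5c hx5x1 hx5c hx5x3
      hzc hzx1 hzc hzx3 (ne_of_mem_of_not_mem hz ht6) hzx5
  push_neg at HT
  -- B, D partition
  have hBW : (L 1).erase c ⊆ (L 6).erase c := by
    intro x hx
    rcases Finset.mem_erase.1 hx with ⟨hxc, hx1⟩
    exact Finset.mem_erase.2 ⟨hxc, by_contra fun h6 => hxc (H14 x hx1 h6)⟩
  have hDW : (L 3).erase c ⊆ (L 6).erase c := by
    intro x hx
    rcases Finset.mem_erase.1 hx with ⟨hxc, hx3⟩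
    exact Finset.mem_erase.2 ⟨hxc, by_contra fun h6 => hxc (H16 x hx3 h6)⟩
  have hB2 : 2 ≤ ((L 1).erase c).card := by
    have h := Finset.pred_card_le_card_erase (a := c) (s := L 1); omega
  have hD2 : 2 ≤ ((L 3).erase c).card := by
    have h := Finset.pred_card_le_card_erase (a := c) (s := L 3); omega
  obtain ⟨hBc, hDc, pBD⟩ := subset_trick hBW hDW
    (fun x hx hx' => (Finset.mem_erase.1 hx).1
      (H12 x (Finset.mem_erase.1 hx).2 (Finset.mem_erase.1 hx').2)) hB2 hD2 hWcard
  have hc1 : c ∈ L 1 := mem_of_small_erase (by omega)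
  have hc3 : c ∈ L 3 := mem_of_small_erase (by omega)
  obtain ⟨t, ht4, htc⟩ := pick2 (L 4) c (by omega)
  have ht6 : t ∈ L 6 := HT t ht4
  have htW : t ∈ (L 6).erase c := Finset.mem_erase.2 ⟨htc, ht6⟩
  by_cases H19 : ∃ g, g ∈ L 0 ∧ g ∈ L 3 ∧ g ≠ c
  · obtain ⟨g, hg0, hg3, hgc⟩ := H19
    obtain ⟨x2, hx2, hx2c, hx2g⟩ := pick3 (L 2) c g (by omega)
    obtain ⟨x5, hx5, hx5g, hx5c, hx5x2⟩ := pick4 (L 5) g c x2 (by omega)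
    obtain ⟨z, hz, hzg, hzc, hzx2, hzx5⟩ := pick5 (L 6) g c x2 x5 (by omega)
    exact build g c x2 g c x5 z hg0 hc1 hx2 hg3 hc4 hx5 hz
      hgc hx2c.symm hx2g hgc hgc.symm
      hx5g hx5c hx5x2 hx5g
      hzg hzc hzx2 hzg hzc hzx5
  push_neg at H19
  have hDC : (L 3).erase c ⊆ (L 2).erase c := by
    intro x hx
    rcases Finset.mem_erase.1 hx with ⟨hxc, hx3⟩
    rcases pAC x (hDW hx) with hA | hC
    · exact absurd (H19 x (Finset.mem_of_mem_erase hA) hx3) hxc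
    · exact hC
  have hDCeq : (L 3).erase c = (L 2).erase c :=
    Finset.eq_of_subset_of_card_le hDC (by omega)
  have hBA : (L 1).erase c ⊆ (L 0).erase c := by
    intro x hx
    rcases Finset.mem_erase.1 hx with ⟨hxc, hx1⟩
    rcases pAC x (hBW hx) with hA | hC
    · exact hA
    · exact absurd (H12 x hx1 (Finset.mem_of_mem_erase (hDCeq ▸ hC))) hxc
  have hBAeq : (L 1).erase c = (L 0).erase c :=
    Finset.eq_of_subset_of_card_le hBA (by omega)
  rcases pAC t htW with htA | htC
  · have ht1 : t ∈ L 1 := Finset.mem_of_mem_erase (hBAeq ▸ htA)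
    obtain ⟨x3, hx3, hx3c, hx3t⟩ := pick3 (L 3) c t (by omega)
    obtain ⟨x5, hx5, hx5c, hx5t, hx5x3⟩ := pick4 (L 5) c t x3 (by omega)
    obtain ⟨z, hz, hzc, hzt, hzx3, hzx5⟩ := pick5 (L 6) c t x3 x5 (by omega)
    exact build c t c x3 t x5 z hc0 ht1 hc2 hx3 ht4 hx5 hz
      htc.symm htc hx3c.symm hx3t htc
      hx5c hx5t hx5c hx5x3
      hzc hzt hzc hzx3 hzt hzx5
  · have ht2 : t ∈ L 2 := Finset.mem_of_mem_erase htC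
    have ht3 : t ∈ L 3 := Finset.mem_of_mem_erase (hDCeq ▸ htC)
    obtain ⟨x0, hx0, hx0c, hx0t⟩ := pick3 (L 0) c t (by omega)
    obtain ⟨x5, hx5, hx5x0, hx5c, hx5t⟩ := pick4 (L 5) x0 c t (by omega)
    obtain ⟨z, hz, hzx0, hzc, hzt, hzx5⟩ := pick5 (L 6) x0 c t x5 (by omega)
    exact build x0 c t c t x5 z hx0 hc1 ht2 hc3 ht4 hx5 hz
      hx0c htc.symm htc htc.symm hx0t.symm
      hx5x0 hx5c hx5t hx5c
      hzx0 hzc hzt hzc hzt hzx5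
lemma case2X (L : Fin 7 → Finset ℕ)
    (n0 : (L 0).card = 3) (n1 : (L 1).card = 3) (n2 : (L 2).card = 3)
    (n3 : (L 3).card = 3) (n4 : (L 4).card = 2) (n5 : (L 5).card = 4)
    (n6 : (L 6).card = 5)
    (hd : ∀ x, x ∈ L 4 → x ∉ L 5)
    (e : ℕ) (he1 : e ∈ L 1) (he4 : e ∈ L 4) : GOOD L := by
  have he5 : e ∉ L 5 := hd e he4
  by_cases H1 : ∃ g, g ∈ L 0 ∧ g ∈ L 2 ∧ g ≠ e
  · obtain ⟨g, hg0, hg2, hge⟩ := H1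
    obtain ⟨x3, hx3, hx3e, hx3g⟩ := pick3 (L 3) e g (by omega)
    obtain ⟨x5, hx5, hx5g, hx5x3⟩ := pick3 (L 5) g x3 (by omega)
    obtain ⟨z, hz, hze, hzg, hzx3, hzx5⟩ := pick5 (L 6) e g x3 x5 (by omega)
    exact build g e g x3 e x5 z hg0 he1 hg2 hx3 he4 hx5 hz
      hge hge.symm hx3g.symm hx3e hge.symm
      hx5g (ne_of_mem_of_not_mem hx5 he5) hx5g hx5x3
      hzg hze hzg hzx3 hze hzx5
  by_cases H2 : ∃ g, g ∈ L 0 ∧ g ∈ L 3 ∧ g ≠ e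
  · obtain ⟨g, hg0, hg3, hge⟩ := H2
    obtain ⟨x2, hx2, hx2e, hx2g⟩ := pick3 (L 2) e g (by omega)
    obtain ⟨x5, hx5, hx5g, hx5x2⟩ := pick3 (L 5) g x2 (by omega)
    obtain ⟨z, hz, hze, hzg, hzx2, hzx5⟩ := pick5 (L 6) e g x2 x5 (by omega)
    exact build g e x2 g e x5 z hg0 he1 hx2 hg3 he4 hx5 hz
      hge hx2e.symm hx2g hge hge.symm
      hx5g (ne_of_mem_of_not_mem hx5 he5) hx5x2 hx5g
      hzg hze hzx2 hzg hze hzx5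
  by_cases H3 : e ∉ L 6
  · obtain ⟨x0, hx0, hx0e⟩ := pick2 (L 0) e (by omega)
    obtain ⟨x3, hx3, hx3e⟩ := pick2 (L 3) e (by omega)
    obtain ⟨x2, hx2, hx2e, hx2x3⟩ := pick3 (L 2) e x3 (by omega)
    obtain ⟨x5, hx5, hx5x0, hx5x2, hx5x3⟩ := pick4 (L 5) x0 x2 x3 (by omega)
    obtain ⟨z, hz, hzx0, hzx2, hzx3, hzx5⟩ := pick5 (L 6) x0 x2 x3 x5 (by omega)
    exact build x0 e x2 x3 e x5 z hx0 he1 hx2 hx3 he4 hx5 hz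
      hx0e hx2e.symm hx2x3 hx3e hx0e.symm
      hx5x0 (ne_of_mem_of_not_mem hx5 he5) hx5x2 hx5x3
      hzx0 (ne_of_mem_of_not_mem hz H3) hzx2 hzx3 (ne_of_mem_of_not_mem hz H3) hzx5
  by_cases H4 : ∃ g, g ∈ L 0 ∧ g ∉ L 6 ∧ g ≠ e
  · obtain ⟨g, hg0, hg6, hge⟩ := H4
    obtain ⟨x3, hx3, hx3e⟩ := pick2 (L 3) e (by omega)
    obtain ⟨x2, hx2, hx2e, hx2x3⟩ := pick3 (L 2) e x3 (by omega)
    obtain ⟨x5, hx5, hx5g, hx5x2, hx5x3⟩ := pick4 (L 5) g x2 x3 (by omega)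
    obtain ⟨z, hz, hze, hzx2, hzx3, hzx5⟩ := pick5 (L 6) e x2 x3 x5 (by omega)
    exact build g e x2 x3 e x5 z hg0 he1 hx2 hx3 he4 hx5 hz
      hge hx2e.symm hx2x3 hx3e hge.symm
      hx5g (ne_of_mem_of_not_mem hx5 he5) hx5x2 hx5x3
      (ne_of_mem_of_not_mem hz hg6) hze hzx2 hzx3 hze hzx5
  by_cases H5 : ∃ g, g ∈ L 2 ∧ g ∉ L 6 ∧ g ≠ e
  · obtain ⟨g, hg2, hg6, hge⟩ := H5
    obtain ⟨x3, hx3, hx3e, hx3g⟩ := pick3 (L 3) e g (by omega)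
    obtain ⟨x0, hx0, hx0e⟩ := pick2 (L 0) e (by omega)
    obtain ⟨x5, hx5, hx5x0, hx5g, hx5x3⟩ := pick4 (L 5) x0 g x3 (by omega)
    obtain ⟨z, hz, hze, hzx0, hzx3, hzx5⟩ := pick5 (L 6) e x0 x3 x5 (by omega)
    exact build x0 e g x3 e x5 z hx0 he1 hg2 hx3 he4 hx5 hz
      hx0e hge.symm hx3g.symm hx3e hx0e.symm
      hx5x0 (ne_of_mem_of_not_mem hx5 he5) hx5g hx5x3
      hzx0 hze (ne_of_mem_of_not_mem hz hg6) hzx3 hze hzx5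
  by_cases H6 : ∃ g, g ∈ L 3 ∧ g ∉ L 6 ∧ g ≠ e
  · obtain ⟨g, hg3, hg6, hge⟩ := H6
    obtain ⟨x2, hx2, hx2e, hx2g⟩ := pick3 (L 2) e g (by omega)
    obtain ⟨x0, hx0, hx0e⟩ := pick2 (L 0) e (by omega)
    obtain ⟨x5, hx5, hx5x0, hx5x2, hx5g⟩ := pick4 (L 5) x0 x2 g (by omega)
    obtain ⟨z, hz, hze, hzx0, hzx2, hzx5⟩ := pick5 (L 6) e x0 x2 x5 (by omega)
    exact build x0 e x2 g e x5 z hx0 he1 hx2 hg3 he4 hx5 hz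
      hx0e hx2e.symm hx2g hge hx0e.symm
      hx5x0 (ne_of_mem_of_not_mem hx5 he5) hx5x2 hx5g
      hzx0 hze hzx2 (ne_of_mem_of_not_mem hz hg6) hze hzx5
  by_cases H7 : ∃ g, g ∈ L 5 ∧ g ∉ L 6
  · obtain ⟨g, hg5, hg6⟩ := H7
    push_neg at H4 H5 H6
    have hge : g ≠ e := ne_of_mem_of_not_mem hg5 he5
    have hg0 : g ∉ L 0 := fun h => hge (H4 g h hg6)
    have hg2 : g ∉ L 2 := fun h => hge (H5 g h hg6)
    have hg3 : g ∉ L 3 := fun h => hge (H6 g h hg6)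
    obtain ⟨x0, hx0, hx0e⟩ := pick2 (L 0) e (by omega)
    obtain ⟨x3, hx3, hx3e⟩ := pick2 (L 3) e (by omega)
    obtain ⟨x2, hx2, hx2e, hx2x3⟩ := pick3 (L 2) e x3 (by omega)
    obtain ⟨z, hz, hze, hzx0, hzx2, hzx3⟩ := pick5 (L 6) e x0 x2 x3 (by omega)
    exact build x0 e x2 x3 e g z hx0 he1 hx2 hx3 he4 hg5 hz
      hx0e hx2e.symm hx2x3 hx3e hx0e.symm
      (ne_of_mem_of_not_mem hx0 hg0).symm hge (ne_of_mem_of_not_mem hx2 hg2).symm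
      (ne_of_mem_of_not_mem hx3 hg3).symm
      hzx0 hze hzx2 hzx3 hze (ne_of_mem_of_not_mem hz hg6)
  -- X8 : structural case
  push_neg at H1 H2 H3 H4 H5 H6 H7
  have hWcard : ((L 6).erase e).card = 4 := by
    rw [Finset.card_erase_of_mem H3, n6]
  have hAW : (L 0).erase e ⊆ (L 6).erase e := by
    intro x hx
    rcases Finset.mem_erase.1 hx with ⟨hxe, hx0⟩
    exact Finset.mem_erase.2 ⟨hxe, by_contra fun h6 => hxe (H4 x hx0 h6)⟩
  have hCW : (L 2).erase e ⊆ (L 6).erase e := by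
    intro x hx
    rcases Finset.mem_erase.1 hx with ⟨hxe, hx2⟩
    exact Finset.mem_erase.2 ⟨hxe, by_contra fun h6 => hxe (H5 x hx2 h6)⟩
  have hDW : (L 3).erase e ⊆ (L 6).erase e := by
    intro x hx
    rcases Finset.mem_erase.1 hx with ⟨hxe, hx3⟩
    exact Finset.mem_erase.2 ⟨hxe, by_contra fun h6 => hxe (H6 x hx3 h6)⟩
  have hA2 : 2 ≤ ((L 0).erase e).card := by
    have h := Finset.pred_card_le_card_erase (a := e) (s := L 0); omega
  have hC2 : 2 ≤ ((L 2).erase e).card := by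
    have h := Finset.pred_card_le_card_erase (a := e) (s := L 2); omega
  have hD2 : 2 ≤ ((L 3).erase e).card := by
    have h := Finset.pred_card_le_card_erase (a := e) (s := L 3); omega
  obtain ⟨hAc, hCc, pAC⟩ := subset_trick hAW hCW
    (fun x hx hx' => (Finset.mem_erase.1 hx).1
      (H1 x (Finset.mem_erase.1 hx).2 (Finset.mem_erase.1 hx').2)) hA2 hC2 hWcard
  have hDC : (L 3).erase e ⊆ (L 2).erase e := by
    intro x hx
    rcases Finset.mem_erase.1 hx with ⟨hxe, hx3⟩
    rcases pAC x (hDW hx) with hA | hC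
    · exact absurd (H2 x (Finset.mem_of_mem_erase hA) hx3) hxe
    · exact hC
  have hDCeq : (L 3).erase e = (L 2).erase e :=
    Finset.eq_of_subset_of_card_le hDC (by omega)
  have he3 : e ∈ L 3 := mem_of_small_erase (by rw [hDCeq]; omega)
  obtain ⟨t, ht4, hte⟩ := pick2 (L 4) e (by omega)
  have ht5 : t ∉ L 5 := hd t ht4
  have ht6 : t ∉ L 6 := by
    intro h6
    have hsub : L 5 ⊆ (L 6).erase t := fun x hx =>
      Finset.mem_erase.2 ⟨ne_of_mem_of_not_mem hx ht5, H7 x hx⟩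
    have hcard : ((L 6).erase t).card = 4 := by
      rw [Finset.card_erase_of_mem h6, n6]
    have heq : L 5 = (L 6).erase t := Finset.eq_of_subset_of_card_le hsub (by omega)
    exact he5 (heq ▸ Finset.mem_erase.2 ⟨hte.symm, H3⟩)
  obtain ⟨x0, hx0, hx0e⟩ := pick2 (L 0) e (by omega)
  have hx06 : x0 ∈ L 6 := by_contra fun h => hx0e (H4 x0 hx0 h)
  obtain ⟨x2, hx2, hx2e⟩ := pick2 (L 2) e (by omega)
  obtain ⟨x5, hx5, hx5x0, hx5e, hx5x2⟩ := pick4 (L 5) x0 e x2 (by omega)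
  obtain ⟨z, hz, hzx0, hze, hzx2, hzx5⟩ := pick5 (L 6) x0 e x2 x5 (by omega)
  exact build x0 e x2 e t x5 z hx0 he1 hx2 he3 ht4 hx5 hz
    hx0e hx2e.symm hx2e hte.symm (ne_of_mem_of_not_mem hx06 ht6).symm
    hx5x0 hx5e hx5x2 hx5e
    hzx0 hze hzx2 hze (ne_of_mem_of_not_mem hz ht6) hzx5
lemma caseZA4a (L : Fin 7 → Finset ℕ)
    (n0 : (L 0).card = 3) (n1 : (L 1).card = 3) (n2 : (L 2).card = 3)
    (n3 : (L 3).card = 3) (n4 : (L 4).card = 2) (n5 : (L 5).card = 4)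
    (n6 : (L 6).card = 5)
    (P02 : ∀ x, x ∈ L 0 → x ∈ L 2 → False)
    (P03 : ∀ x, x ∈ L 0 → x ∈ L 3 → False)
    (P13 : ∀ x, x ∈ L 1 → x ∈ L 3 → False)
    (HT : ∀ x, x ∈ L 4 → x ∈ L 6)
    (f : ℕ) (hf5 : f ∈ L 5) (hf6 : f ∉ L 6)
    (g : ℕ) (hg0 : g ∈ L 0) (hg6 : g ∉ L 6) (hgf : g ≠ f) : GOOD L := by
  obtain ⟨t, ht4⟩ := pick1 (L 4) (by omega)
  have ht6 : t ∈ L 6 := HT t ht4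
  have htf : t ≠ f := ne_of_mem_of_not_mem ht6 hf6
  have htg : t ≠ g := ne_of_mem_of_not_mem ht6 hg6
  obtain ⟨x3, hx3, hx3f, hx3t⟩ := pick3 (L 3) f t (by omega)
  obtain ⟨x2, hx2, hx2f, hx2x3⟩ := pick3 (L 2) f x3 (by omega)
  have hgx2 : g ≠ x2 := fun h => P02 g hg0 (h ▸ hx2)
  by_cases h1 : ∃ y, y ∈ L 1 ∧ y ≠ f ∧ y ≠ g ∧ y ≠ x2
  · obtain ⟨y, hy1, hyf, hyg, hyx2⟩ := h1
    obtain ⟨z, hz, hzy, hzx2, hzx3, hzt⟩ := pick5 (L 6) y x2 x3 t (by omega)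
    exact build g y x2 x3 t f z hg0 hy1 hx2 hx3 ht4 hf5 hz
      hyg.symm hyx2 hx2x3 hx3t htg
      hgf.symm hyf.symm hx2f.symm hx3f.symm
      (ne_of_mem_of_not_mem hz hg6) hzy hzx2 hzx3 hzt (ne_of_mem_of_not_mem hz hf6)
  push_neg at h1
  have hL1sub : L 1 ⊆ {f, g, x2} := fun y hy => by
    by_cases h : y = f
    · simp [h]
    by_cases h' : y = g
    · simp [h']
    · simp [h1 y hy h h']
  have hL1eq : L 1 = {f, g, x2} :=
    Finset.eq_of_subset_of_card_le hL1sub (by have := card3 f g x2; omega)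
  have hf1 : f ∈ L 1 := hL1eq ▸ (by simp)
  have hx21 : x2 ∈ L 1 := hL1eq ▸ (by simp)
  by_cases h2 : ∃ w, w ∈ L 2 ∧ w ≠ f ∧ w ≠ x3 ∧ w ≠ x2
  · obtain ⟨w, hw2, hwf, hwx3, hwx2⟩ := h2
    obtain ⟨z, hz, hzx2, hzw, hzx3, hzt⟩ := pick5 (L 6) x2 w x3 t (by omega)
    exact build g x2 w x3 t f z hg0 hx21 hw2 hx3 ht4 hf5 hz
      hgx2 hwx2.symm hwx3 hx3t htg
      hgf.symm hx2f.symm hwf.symm hx3f.symm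
      (ne_of_mem_of_not_mem hz hg6) hzx2 hzw hzx3 hzt (ne_of_mem_of_not_mem hz hf6)
  push_neg at h2
  have hL2sub : L 2 ⊆ {f, x3, x2} := fun y hy => by
    by_cases h : y = f
    · simp [h]
    by_cases h' : y = x3
    · simp [h']
    · simp [h2 y hy h h']
  have hL2eq : L 2 = {f, x3, x2} :=
    Finset.eq_of_subset_of_card_le hL2sub (by have := card3 f x3 x2; omega)
  have hx32 : x3 ∈ L 2 := hL2eq ▸ (by simp)
  by_cases h3 : ∃ v, v ∈ L 3 ∧ v ≠ f ∧ v ≠ t ∧ v ≠ x3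
  · obtain ⟨v, hv3, hvf, hvt, hvx3⟩ := h3
    obtain ⟨z, hz, hzx2, hzx3, hzv, hzt⟩ := pick5 (L 6) x2 x3 v t (by omega)
    exact build g x2 x3 v t f z hg0 hx21 hx32 hv3 ht4 hf5 hz
      hgx2 hx2x3 hvx3.symm hvt htg
      hgf.symm hx2f.symm hx3f.symm hvf.symm
      (ne_of_mem_of_not_mem hz hg6) hzx2 hzx3 hzv hzt (ne_of_mem_of_not_mem hz hf6)
  push_neg at h3
  have hL3sub : L 3 ⊆ {f, t, x3} := fun y hy => by
    by_cases h : y = f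
    · simp [h]
    by_cases h' : y = t
    · simp [h']
    · simp [h3 y hy h h']
  have hL3eq : L 3 = {f, t, x3} :=
    Finset.eq_of_subset_of_card_le hL3sub (by have := card3 f t x3; omega)
  have hf3 : f ∈ L 3 := hL3eq ▸ (by simp)
  exact (P13 f hf1 hf3).elim

lemma caseZA4b (L : Fin 7 → Finset ℕ)
    (n0 : (L 0).card = 3) (n1 : (L 1).card = 3) (n2 : (L 2).card = 3)
    (n3 : (L 3).card = 3) (n4 : (L 4).card = 2) (n5 : (L 5).card = 4)
    (n6 : (L 6).card = 5)
    (FX : ∀ x, x ∈ L 1 → x ∈ L 4 → False) (FY : ∀ x, x ∈ L 2 → x ∈ L 4 → False)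
    (P02 : ∀ x, x ∈ L 0 → x ∈ L 2 → False)
    (P03 : ∀ x, x ∈ L 0 → x ∈ L 3 → False)
    (P13 : ∀ x, x ∈ L 1 → x ∈ L 3 → False)
    (HT : ∀ x, x ∈ L 4 → x ∈ L 6)
    (f : ℕ) (hf5 : f ∈ L 5) (hf6 : f ∉ L 6)
    (FA : ∀ x, x ∈ L 0 → x ∉ L 6 → x = f)
    (g : ℕ) (hg1 : g ∈ L 1) (hg6 : g ∉ L 6) (hgf : g ≠ f) : GOOD L := by
  obtain ⟨t, ht4⟩ := pick1 (L 4) (by omega)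
  have ht6 : t ∈ L 6 := HT t ht4
  have htf : t ≠ f := ne_of_mem_of_not_mem ht6 hf6
  have htg : t ≠ g := ne_of_mem_of_not_mem ht6 hg6
  obtain ⟨x2, hx2, hx2f, hx2g⟩ := pick3 (L 2) f g (by omega)
  have hx2t : x2 ≠ t := fun h => FY x2 hx2 (h ▸ ht4)
  by_cases h3 : ∃ v, v ∈ L 3 ∧ v ≠ f ∧ v ≠ t ∧ v ≠ x2
  · obtain ⟨v, hv3, hvf, hvt, hvx2⟩ := h3
    by_cases h0 : ∃ x, x ∈ L 0 ∧ x ≠ g ∧ x ≠ t ∧ x ≠ f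
    · obtain ⟨x0, hx0, hx0g, hx0t, hx0f⟩ := h0
      obtain ⟨z, hz, hzx0, hzx2, hzv, hzt⟩ := pick5 (L 6) x0 x2 v t (by omega)
      exact build x0 g x2 v t f z hx0 hg1 hx2 hv3 ht4 hf5 hz
        hx0g hx2g.symm hvx2.symm hvt hx0t.symm
        hx0f.symm hgf.symm hx2f.symm hvf.symm
        hzx0 (ne_of_mem_of_not_mem hz hg6) hzx2 hzv hzt (ne_of_mem_of_not_mem hz hf6)
    · push_neg at h0
      have hL0sub : L 0 ⊆ {g, t, f} := fun y hy => by
        by_cases h : y = g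
        · simp [h]
        by_cases h' : y = t
        · simp [h']
        · simp [h0 y hy h h']
      have hL0eq : L 0 = {g, t, f} :=
        Finset.eq_of_subset_of_card_le hL0sub (by have := card3 g t f; omega)
      have hg0 : g ∈ L 0 := hL0eq ▸ (by simp)
      exact absurd (FA g hg0 hg6) hgf
  push_neg at h3
  have hL3sub : L 3 ⊆ {f, t, x2} := fun y hy => by
    by_cases h : y = f
    · simp [h]
    by_cases h' : y = t
    · simp [h']
    · simp [h3 y hy h h']
  have hL3eq : L 3 = {f, t, x2} :=
    Finset.eq_of_subset_of_card_le hL3sub (by have := card3 f t x2; omega)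
  have hf3 : f ∈ L 3 := hL3eq ▸ (by simp)
  have hx23 : x2 ∈ L 3 := hL3eq ▸ (by simp)
  by_cases h2 : ∃ w, w ∈ L 2 ∧ w ≠ f ∧ w ≠ g ∧ w ≠ x2
  · obtain ⟨w, hw2, hwf, hwg, hwx2⟩ := h2
    by_cases h0 : ∃ x, x ∈ L 0 ∧ x ≠ g ∧ x ≠ t ∧ x ≠ f
    · obtain ⟨x0, hx0, hx0g, hx0t, hx0f⟩ := h0
      obtain ⟨z, hz, hzx0, hzw, hzx2, hzt⟩ := pick5 (L 6) x0 w x2 t (by omega)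
      exact build x0 g w x2 t f z hx0 hg1 hw2 hx23 ht4 hf5 hz
        hx0g hwg.symm hwx2 hx2t hx0t.symm
        hx0f.symm hgf.symm hwf.symm hx2f.symm
        hzx0 (ne_of_mem_of_not_mem hz hg6) hzw hzx2 hzt (ne_of_mem_of_not_mem hz hf6)
    · push_neg at h0
      have hL0sub : L 0 ⊆ {g, t, f} := fun y hy => by
        by_cases h : y = g
        · simp [h]
        by_cases h' : y = t
        · simp [h']
        · simp [h0 y hy h h']
      have hL0eq : L 0 = {g, t, f} :=
        Finset.eq_of_subset_of_card_le hL0sub (by have := card3 g t f; omega)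
      have hg0 : g ∈ L 0 := hL0eq ▸ (by simp)
      exact absurd (FA g hg0 hg6) hgf
  push_neg at h2
  have hL2sub : L 2 ⊆ {f, g, x2} := fun y hy => by
    by_cases h : y = f
    · simp [h]
    by_cases h' : y = g
    · simp [h']
    · simp [h2 y hy h h']
  have hL2eq : L 2 = {f, g, x2} :=
    Finset.eq_of_subset_of_card_le hL2sub (by have := card3 f g x2; omega)
  have hg2 : g ∈ L 2 := hL2eq ▸ (by simp)
  obtain ⟨y, hy1, hyf, hyg⟩ := pick3 (L 1) f g (by omega)
  by_cases h0 : ∃ x, x ∈ L 0 ∧ x ≠ y ∧ x ≠ t ∧ x ≠ f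
  · obtain ⟨x0, hx0, hx0y, hx0t, hx0f⟩ := h0
    obtain ⟨z, hz, hzx0, hzy, hzx2, hzt⟩ := pick5 (L 6) x0 y x2 t (by omega)
    exact build x0 y g x2 t f z hx0 hy1 hg2 hx23 ht4 hf5 hz
      hx0y hyg hx2g.symm hx2t hx0t.symm
      hx0f.symm hyf.symm hgf.symm hx2f.symm
      hzx0 hzy (ne_of_mem_of_not_mem hz hg6) hzx2 hzt (ne_of_mem_of_not_mem hz hf6)
  · push_neg at h0
    have hL0sub : L 0 ⊆ {y, t, f} := fun w hw => by
      by_cases h : w = y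
      · simp [h]
      by_cases h' : w = t
      · simp [h']
      · simp [h0 w hw h h']
    have hL0eq : L 0 = {y, t, f} :=
      Finset.eq_of_subset_of_card_le hL0sub (by have := card3 y t f; omega)
    have hf0 : f ∈ L 0 := hL0eq ▸ (by simp)
    exact (P03 f hf0 hf3).elim

lemma caseZA4e (L : Fin 7 → Finset ℕ)
    (n0 : (L 0).card = 3) (n1 : (L 1).card = 3) (n2 : (L 2).card = 3)
    (n3 : (L 3).card = 3) (n4 : (L 4).card = 2) (n5 : (L 5).card = 4)
    (n6 : (L 6).card = 5)
    (FX : ∀ x, x ∈ L 1 → x ∈ L 4 → False) (FY : ∀ x, x ∈ L 2 → x ∈ L 4 → False)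
    (P02 : ∀ x, x ∈ L 0 → x ∈ L 2 → False)
    (P03 : ∀ x, x ∈ L 0 → x ∈ L 3 → False)
    (P13 : ∀ x, x ∈ L 1 → x ∈ L 3 → False)
    (HT : ∀ x, x ∈ L 4 → x ∈ L 6)
    (f : ℕ)
    (FA : ∀ x, x ∈ L 0 → x ∉ L 6 → x = f)
    (FB : ∀ x, x ∈ L 1 → x ∉ L 6 → x = f)
    (FC : ∀ x, x ∈ L 2 → x ∉ L 6 → x = f)
    (FD : ∀ x, x ∈ L 3 → x ∉ L 6 → x = f)
    (hf0 : f ∈ L 0) : GOOD L := by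
  exfalso
  have hf3 : f ∉ L 3 := fun h => P03 f hf0 h
  have hL3sub : L 3 ⊆ L 6 := fun x hx => by_contra fun h6 => hf3 ((FD x hx h6) ▸ hx)
  have hA0card : ((L 0).erase f).card = 2 := by rw [Finset.card_erase_of_mem hf0, n0]
  have hA0sub : (L 0).erase f ⊆ L 6 := fun x hx => by
    rcases Finset.mem_erase.1 hx with ⟨hxf, hx0⟩
    exact by_contra fun h6 => hxf (FA x hx0 h6)
  have hdisj : Disjoint ((L 0).erase f) (L 3) :=
    Finset.disjoint_left.2 fun {x} h h' => (P03 x (Finset.mem_of_mem_erase h) h').elim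
  have hucard : ((L 0).erase f ∪ L 3).card = 5 := by
    rw [Finset.card_union_of_disjoint hdisj, hA0card, n3]
  have heq : (L 0).erase f ∪ L 3 = L 6 :=
    Finset.eq_of_subset_of_card_le (Finset.union_subset hA0sub hL3sub) (by omega)
  have part : ∀ x ∈ L 6, x ∈ (L 0).erase f ∨ x ∈ L 3 := fun x hx =>
    Finset.mem_union.1 (heq ▸ hx)
  have hL1L0 : L 1 ⊆ L 0 := fun x hx => by
    by_cases h6 : x ∈ L 6
    · rcases part x h6 with h | h
      · exact Finset.mem_of_mem_erase h
      · exact (P13 x hx h).elim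
    · exact (FB x hx h6) ▸ hf0
  have hL1eq : L 1 = L 0 := Finset.eq_of_subset_of_card_le hL1L0 (by omega)
  have hL2L3 : L 2 ⊆ L 3 := fun x hx => by
    by_cases h6 : x ∈ L 6
    · rcases part x h6 with h | h
      · exact (P02 x (Finset.mem_of_mem_erase h) hx).elim
      · exact h
    · exact (P02 f hf0 ((FC x hx h6) ▸ hx)).elim
  have hL2eq : L 2 = L 3 := Finset.eq_of_subset_of_card_le hL2L3 (by omega)
  obtain ⟨t, ht4⟩ := pick1 (L 4) (by omega)
  rcases part t (HT t ht4) with h | h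
  · exact FX t (hL1eq ▸ Finset.mem_of_mem_erase h) ht4
  · exact FY t (hL2eq ▸ h) ht4
lemma case2Z (L : Fin 7 → Finset ℕ)
    (n0 : (L 0).card = 3) (n1 : (L 1).card = 3) (n2 : (L 2).card = 3)
    (n3 : (L 3).card = 3) (n4 : (L 4).card = 2) (n5 : (L 5).card = 4)
    (n6 : (L 6).card = 5)
    (hd : ∀ x, x ∈ L 4 → x ∉ L 5)
    (FX : ∀ x, x ∈ L 1 → x ∈ L 4 → False)
    (FY : ∀ x, x ∈ L 2 → x ∈ L 4 → False) : GOOD L := by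
  by_cases Z0a : ∃ g, g ∈ L 0 ∧ g ∈ L 2 ∧ g ∉ L 6
  · obtain ⟨g, hg0, hg2, hg6⟩ := Z0a
    have hg4 : g ∉ L 4 := fun h => FY g hg2 h
    obtain ⟨x1, hx1, hx1g⟩ := pick2 (L 1) g (by omega)
    obtain ⟨x3, hx3, hx3g⟩ := pick2 (L 3) g (by omega)
    obtain ⟨x4, hx4, hx4x3⟩ := pick2 (L 4) x3 (by omega)
    have hx4g : x4 ≠ g := ne_of_mem_of_not_mem hx4 hg4
    obtain ⟨x5, hx5, hx5g, hx5x1, hx5x3⟩ := pick4 (L 5) g x1 x3 (by omega)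
    obtain ⟨z, hz, hzx1, hzx3, hzx4, hzx5⟩ := pick5 (L 6) x1 x3 x4 x5 (by omega)
    exact build g x1 g x3 x4 x5 z hg0 hx1 hg2 hx3 hx4 hx5 hz
      hx1g.symm hx1g hx3g.symm hx4x3.symm hx4g
      hx5g hx5x1 hx5g hx5x3
      (ne_of_mem_of_not_mem hz hg6) hzx1 (ne_of_mem_of_not_mem hz hg6) hzx3 hzx4 hzx5
  by_cases Z0b : ∃ g, g ∈ L 0 ∧ g ∈ L 3 ∧ g ∉ L 6
  · obtain ⟨g, hg0, hg3, hg6⟩ := Z0b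
    obtain ⟨x1, hx1, hx1g⟩ := pick2 (L 1) g (by omega)
    obtain ⟨x2, hx2, hx2g, hx2x1⟩ := pick3 (L 2) g x1 (by omega)
    obtain ⟨x4, hx4, hx4g⟩ := pick2 (L 4) g (by omega)
    obtain ⟨x5, hx5, hx5g, hx5x1, hx5x2⟩ := pick4 (L 5) g x1 x2 (by omega)
    obtain ⟨z, hz, hzx1, hzx2, hzx4, hzx5⟩ := pick5 (L 6) x1 x2 x4 x5 (by omega)
    exact build g x1 x2 g x4 x5 z hg0 hx1 hx2 hg3 hx4 hx5 hz
      hx1g.symm hx2x1.symm hx2g hx4g.symm hx4g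
      hx5g hx5x1 hx5x2 hx5g
      (ne_of_mem_of_not_mem hz hg6) hzx1 hzx2 (ne_of_mem_of_not_mem hz hg6) hzx4 hzx5
  by_cases Z0c : ∃ g, g ∈ L 1 ∧ g ∈ L 3 ∧ g ∉ L 6
  · obtain ⟨g, hg1, hg3, hg6⟩ := Z0c
    have hg4 : g ∉ L 4 := fun h => FX g hg1 h
    obtain ⟨x0, hx0, hx0g⟩ := pick2 (L 0) g (by omega)
    obtain ⟨x2, hx2, hx2g⟩ := pick2 (L 2) g (by omega)
    obtain ⟨x4, hx4, hx4x0⟩ := pick2 (L 4) x0 (by omega)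
    have hx4g : x4 ≠ g := ne_of_mem_of_not_mem hx4 hg4
    obtain ⟨x5, hx5, hx5x0, hx5g, hx5x2⟩ := pick4 (L 5) x0 g x2 (by omega)
    obtain ⟨z, hz, hzx0, hzx2, hzx4, hzx5⟩ := pick5 (L 6) x0 x2 x4 x5 (by omega)
    exact build x0 g x2 g x4 x5 z hx0 hg1 hx2 hg3 hx4 hx5 hz
      hx0g hx2g.symm hx2g hx4g.symm hx4x0
      hx5x0 hx5g hx5x2 hx5g
      hzx0 (ne_of_mem_of_not_mem hz hg6) hzx2 (ne_of_mem_of_not_mem hz hg6) hzx4 hzx5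
  by_cases HF : ∃ f, f ∈ L 5 ∧ f ∉ L 6
  · obtain ⟨f, hf5, hf6⟩ := HF
    have hf4 : f ∉ L 4 := fun h => hd f h hf5
    by_cases A1 : ∃ g, g ∈ L 0 ∧ g ∈ L 2 ∧ g ≠ f
    · obtain ⟨g, hg0, hg2, hgf⟩ := A1
      have hg4 : g ∉ L 4 := fun h => FY g hg2 h
      obtain ⟨x1, hx1, hx1f, hx1g⟩ := pick3 (L 1) f g (by omega)
      obtain ⟨x3, hx3, hx3f, hx3g⟩ := pick3 (L 3) f g (by omega)
      obtain ⟨x4, hx4, hx4x3⟩ := pick2 (L 4) x3 (by omega)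
      have hx4g : x4 ≠ g := ne_of_mem_of_not_mem hx4 hg4
      obtain ⟨z, hz, hzg, hzx1, hzx3, hzx4⟩ := pick5 (L 6) g x1 x3 x4 (by omega)
      exact build g x1 g x3 x4 f z hg0 hx1 hg2 hx3 hx4 hf5 hz
        hx1g.symm hx1g hx3g.symm hx4x3.symm hx4g
        hgf.symm hx1f.symm hgf.symm hx3f.symm
        hzg hzx1 hzg hzx3 hzx4 (ne_of_mem_of_not_mem hz hf6)
    by_cases A3 : ∃ g, g ∈ L 1 ∧ g ∈ L 3 ∧ g ≠ f
    · obtain ⟨g, hg1, hg3, hgf⟩ := A3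
      have hg4 : g ∉ L 4 := fun h => FX g hg1 h
      obtain ⟨x0, hx0, hx0f, hx0g⟩ := pick3 (L 0) f g (by omega)
      obtain ⟨x2, hx2, hx2f, hx2g⟩ := pick3 (L 2) f g (by omega)
      obtain ⟨x4, hx4, hx4x0⟩ := pick2 (L 4) x0 (by omega)
      have hx4g : x4 ≠ g := ne_of_mem_of_not_mem hx4 hg4
      obtain ⟨z, hz, hzx0, hzg, hzx2, hzx4⟩ := pick5 (L 6) x0 g x2 x4 (by omega)
      exact build x0 g x2 g x4 f z hx0 hg1 hx2 hg3 hx4 hf5 hz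
        hx0g hx2g.symm hx2g hx4g.symm hx4x0
        hx0f.symm hgf.symm hx2f.symm hgf.symm
        hzx0 hzg hzx2 hzg hzx4 (ne_of_mem_of_not_mem hz hf6)
    by_cases A2 : ∃ g, g ∈ L 0 ∧ g ∈ L 3 ∧ g ≠ f
    · obtain ⟨g, hg0, hg3, hgf⟩ := A2
      push_neg at A3
      have hg1n : g ∉ L 1 := fun h => hgf (A3 g h hg3)
      obtain ⟨x2, hx2, hx2f, hx2g⟩ := pick3 (L 2) f g (by omega)
      obtain ⟨x1, hx1, hx1f, hx1x2⟩ := pick3 (L 1) f x2 (by omega)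
      have hx1g : x1 ≠ g := ne_of_mem_of_not_mem hx1 hg1n
      obtain ⟨x4, hx4, hx4g⟩ := pick2 (L 4) g (by omega)
      obtain ⟨z, hz, hzg, hzx1, hzx2, hzx4⟩ := pick5 (L 6) g x1 x2 x4 (by omega)
      exact build g x1 x2 g x4 f z hg0 hx1 hx2 hg3 hx4 hf5 hz
        hx1g.symm hx1x2 hx2g hx4g.symm hx4g
        hgf.symm hx1f.symm hx2f.symm hgf.symm
        hzg hzx1 hzx2 hzg hzx4 (ne_of_mem_of_not_mem hz hf6)
    · push_neg at Z0a Z0b Z0c A1 A2 A3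
      have P02 : ∀ x, x ∈ L 0 → x ∈ L 2 → False :=
        fun x h0 h2 => hf6 ((A1 x h0 h2) ▸ Z0a x h0 h2)
      have P03 : ∀ x, x ∈ L 0 → x ∈ L 3 → False :=
        fun x h0 h3 => hf6 ((A2 x h0 h3) ▸ Z0b x h0 h3)
      have P13 : ∀ x, x ∈ L 1 → x ∈ L 3 → False :=
        fun x h1 h3 => hf6 ((A3 x h1 h3) ▸ Z0c x h1 h3)
      by_cases A0 : ∃ t, t ∈ L 4 ∧ t ∉ L 6
      · obtain ⟨t, ht4, ht6⟩ := A0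
        have htf : t ≠ f := ne_of_mem_of_not_mem ht4 hf4
        obtain ⟨x3, hx3, hx3t, hx3f⟩ := pick3 (L 3) t f (by omega)
        obtain ⟨x2, hx2, hx2f, hx2x3⟩ := pick3 (L 2) f x3 (by omega)
        obtain ⟨x1, hx1, hx1f, hx1x2⟩ := pick3 (L 1) f x2 (by omega)
        by_cases h0 : ∃ x, x ∈ L 0 ∧ x ≠ t ∧ x ≠ f ∧ x ≠ x1
        · obtain ⟨x0, hx0, hx0t, hx0f, hx0x1⟩ := h0
          obtain ⟨z, hz, hzx0, hzx1, hzx2, hzx3⟩ := pick5 (L 6) x0 x1 x2 x3 (by omega)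
          exact build x0 x1 x2 x3 t f z hx0 hx1 hx2 hx3 ht4 hf5 hz
            hx0x1 hx1x2 hx2x3 hx3t hx0t.symm
            hx0f.symm hx1f.symm hx2f.symm hx3f.symm
            hzx0 hzx1 hzx2 hzx3 (ne_of_mem_of_not_mem hz ht6) (ne_of_mem_of_not_mem hz hf6)
        · push_neg at h0
          have hL0sub : L 0 ⊆ {t, f, x1} := fun y hy => by
            by_cases h : y = t
            · simp [h]
            by_cases h' : y = f
            · simp [h']
            · simp [h0 y hy h h']
          have hL0eq : L 0 = {t, f, x1} :=
            Finset.eq_of_subset_of_card_le hL0sub (by have := card3 t f x1; omega)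
          have hx10 : x1 ∈ L 0 := hL0eq ▸ (by simp)
          have hf0 : f ∈ L 0 := hL0eq ▸ (by simp)
          have hx1t : x1 ≠ t := fun h => FX x1 hx1 (h ▸ ht4)
          by_cases h1 : ∃ y, y ∈ L 1 ∧ y ≠ f ∧ y ≠ x2 ∧ y ≠ x1
          · obtain ⟨y, hy1, hyf, hyx2, hyx1⟩ := h1
            obtain ⟨z, hz, hzx1, hzy, hzx2, hzx3⟩ := pick5 (L 6) x1 y x2 x3 (by omega)
            exact build x1 y x2 x3 t f z hx10 hy1 hx2 hx3 ht4 hf5 hz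
              hyx1.symm hyx2 hx2x3 hx3t hx1t.symm
              hx1f.symm hyf.symm hx2f.symm hx3f.symm
              hzx1 hzy hzx2 hzx3 (ne_of_mem_of_not_mem hz ht6) (ne_of_mem_of_not_mem hz hf6)
          · push_neg at h1
            have hL1sub : L 1 ⊆ {f, x2, x1} := fun y hy => by
              by_cases h : y = f
              · simp [h]
              by_cases h' : y = x2
              · simp [h']
              · simp [h1 y hy h h']
            have hL1eq : L 1 = {f, x2, x1} :=
              Finset.eq_of_subset_of_card_le hL1sub (by have := card3 f x2 x1; omega)
            have hx21 : x2 ∈ L 1 := hL1eq ▸ (by simp)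
            by_cases h2 : ∃ w, w ∈ L 2 ∧ w ≠ f ∧ w ≠ x3 ∧ w ≠ x2
            · obtain ⟨w, hw2, hwf, hwx3, hwx2⟩ := h2
              obtain ⟨z, hz, hzx1, hzx2, hzw, hzx3⟩ := pick5 (L 6) x1 x2 w x3 (by omega)
              exact build x1 x2 w x3 t f z hx10 hx21 hw2 hx3 ht4 hf5 hz
                hx1x2 hwx2.symm hwx3 hx3t hx1t.symm
                hx1f.symm hx2f.symm hwf.symm hx3f.symm
                hzx1 hzx2 hzw hzx3 (ne_of_mem_of_not_mem hz ht6) (ne_of_mem_of_not_mem hz hf6)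
            · push_neg at h2
              have hL2sub : L 2 ⊆ {f, x3, x2} := fun y hy => by
                by_cases h : y = f
                · simp [h]
                by_cases h' : y = x3
                · simp [h']
                · simp [h2 y hy h h']
              have hL2eq : L 2 = {f, x3, x2} :=
                Finset.eq_of_subset_of_card_le hL2sub (by have := card3 f x3 x2; omega)
              have hf2 : f ∈ L 2 := hL2eq ▸ (by simp)
              exact (P02 f hf0 hf2).elim
      · push_neg at A0
        by_cases A4a : ∃ g, g ∈ L 0 ∧ g ∉ L 6 ∧ g ≠ f
        · obtain ⟨g, hg0, hg6, hgf⟩ := A4a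
          exact caseZA4a L n0 n1 n2 n3 n4 n5 n6 P02 P03 P13 A0 f hf5 hf6 g hg0 hg6 hgf
        by_cases A4d : ∃ g, g ∈ L 3 ∧ g ∉ L 6 ∧ g ≠ f
        · obtain ⟨g, hg3, hg6, hgf⟩ := A4d
          exact good_mirror L (caseZA4a (fun i => L (mir i)) n3 n2 n1 n0 n4 n5 n6
            (fun x h h' => P13 x h' h) (fun x h h' => P03 x h' h)
            (fun x h h' => P02 x h' h) A0 f hf5 hf6 g hg3 hg6 hgf)
        by_cases A4b : ∃ g, g ∈ L 1 ∧ g ∉ L 6 ∧ g ≠ f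
        · obtain ⟨g, hg1, hg6, hgf⟩ := A4b
          push_neg at A4a
          exact caseZA4b L n0 n1 n2 n3 n4 n5 n6 FX FY P02 P03 P13 A0 f hf5 hf6 A4a g hg1 hg6 hgf
        by_cases A4c : ∃ g, g ∈ L 2 ∧ g ∉ L 6 ∧ g ≠ f
        · obtain ⟨g, hg2, hg6, hgf⟩ := A4c
          push_neg at A4d
          exact good_mirror L (caseZA4b (fun i => L (mir i)) n3 n2 n1 n0 n4 n5 n6
            (fun x h h' => FY x h h') (fun x h h' => FX x h h')
            (fun x h h' => P13 x h' h) (fun x h h' => P03 x h' h)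
            (fun x h h' => P02 x h' h) A0 f hf5 hf6 A4d g hg2 hg6 hgf)
        · push_neg at A4a A4b A4c A4d
          by_cases hf0 : f ∈ L 0
          · exact caseZA4e L n0 n1 n2 n3 n4 n5 n6 FX FY P02 P03 P13 A0 f A4a A4b A4c A4d hf0
          by_cases hf3 : f ∈ L 3
          · exact good_mirror L (caseZA4e (fun i => L (mir i)) n3 n2 n1 n0 n4 n5 n6
              (fun x h h' => FY x h h') (fun x h h' => FX x h h')
              (fun x h h' => P13 x h' h) (fun x h h' => P03 x h' h)
              (fun x h h' => P02 x h' h) A0 f A4d A4c A4b A4a hf3)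
          · exfalso
            have hL0sub : L 0 ⊆ L 6 := fun x hx =>
              by_contra fun h6 => hf0 ((A4a x hx h6) ▸ hx)
            have hL3sub : L 3 ⊆ L 6 := fun x hx =>
              by_contra fun h6 => hf3 ((A4d x hx h6) ▸ hx)
            have hdisj : Disjoint (L 0) (L 3) :=
              Finset.disjoint_left.2 fun {x} h h' => (P03 x h h').elim
            have h1 : (L 0 ∪ L 3).card = 6 := by
              rw [Finset.card_union_of_disjoint hdisj, n0, n3]
            have h2 := Finset.card_le_card (Finset.union_subset hL0sub hL3sub)
            omega
  · push_neg at HF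
    have hEx : ∃ t, t ∈ L 4 ∧ t ∉ L 6 := by
      by_contra h; push_neg at h
      have hsub : L 4 ⊆ L 6 \ L 5 := fun x hx => Finset.mem_sdiff.2 ⟨h x hx, hd x hx⟩
      have hL5L6 : L 5 ⊆ L 6 := fun x hx => HF x hx
      have hcard : (L 6 \ L 5).card = 1 := by rw [Finset.card_sdiff_of_subset hL5L6, n6, n5]
      have := Finset.card_le_card hsub; omega
    obtain ⟨t, ht4, ht6⟩ := hEx
    have ht5 : t ∉ L 5 := hd t ht4
    by_cases B1 : ∃ g, g ∈ L 0 ∧ g ∈ L 2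
    · obtain ⟨g, hg0, hg2⟩ := B1
      have hg4 : g ∉ L 4 := fun h => FY g hg2 h
      have htg : t ≠ g := ne_of_mem_of_not_mem ht4 hg4
      obtain ⟨x1, hx1, hx1g⟩ := pick2 (L 1) g (by omega)
      obtain ⟨x3, hx3, hx3g, hx3t⟩ := pick3 (L 3) g t (by omega)
      obtain ⟨x5, hx5, hx5g, hx5x1, hx5x3⟩ := pick4 (L 5) g x1 x3 (by omega)
      obtain ⟨z, hz, hzg, hzx1, hzx3, hzx5⟩ := pick5 (L 6) g x1 x3 x5 (by omega)
      exact build g x1 g x3 t x5 z hg0 hx1 hg2 hx3 ht4 hx5 hz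
        hx1g.symm hx1g hx3g.symm hx3t htg
        hx5g hx5x1 hx5g hx5x3
        hzg hzx1 hzg hzx3 (ne_of_mem_of_not_mem hz ht6) hzx5
    by_cases B2 : ∃ g, g ∈ L 1 ∧ g ∈ L 3
    · obtain ⟨g, hg1, hg3⟩ := B2
      have hg4 : g ∉ L 4 := fun h => FX g hg1 h
      have htg : t ≠ g := ne_of_mem_of_not_mem ht4 hg4
      obtain ⟨x0, hx0, hx0g, hx0t⟩ := pick3 (L 0) g t (by omega)
      obtain ⟨x2, hx2, hx2g⟩ := pick2 (L 2) g (by omega)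
      obtain ⟨x5, hx5, hx5x0, hx5g, hx5x2⟩ := pick4 (L 5) x0 g x2 (by omega)
      obtain ⟨z, hz, hzx0, hzg, hzx2, hzx5⟩ := pick5 (L 6) x0 g x2 x5 (by omega)
      exact build x0 g x2 g t x5 z hx0 hg1 hx2 hg3 ht4 hx5 hz
        hx0g hx2g.symm hx2g htg.symm hx0t.symm
        hx5x0 hx5g hx5x2 hx5g
        hzx0 hzg hzx2 hzg (ne_of_mem_of_not_mem hz ht6) hzx5
    by_cases B3 : ∃ g, g ∈ L 0 ∧ g ∈ L 3
    · obtain ⟨g, hg0, hg3⟩ := B3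
      by_cases hgt : g = t
      · subst hgt
        have hg1 : g ∉ L 1 := fun h => FX g h ht4
        have hg2 : g ∉ L 2 := fun h => FY g h ht4
        obtain ⟨t2, ht2, ht2g⟩ := pick2 (L 4) g (by omega)
        obtain ⟨x1, hx1⟩ := pick1 (L 1) (by omega)
        have hx1g : x1 ≠ g := ne_of_mem_of_not_mem hx1 hg1
        obtain ⟨x2, hx2, hx2x1⟩ := pick2 (L 2) x1 (by omega)
        have hx2g : x2 ≠ g := ne_of_mem_of_not_mem hx2 hg2
        obtain ⟨x5, hx5, hx5x1, hx5x2⟩ := pick3 (L 5) x1 x2 (by omega)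
        have hx5g : x5 ≠ g := ne_of_mem_of_not_mem hx5 ht5
        obtain ⟨z, hz, hzx1, hzx2, hzt2, hzx5⟩ := pick5 (L 6) x1 x2 t2 x5 (by omega)
        exact build g x1 x2 g t2 x5 z hg0 hx1 hx2 hg3 ht2 hx5 hz
          hx1g.symm hx2x1.symm hx2g ht2g.symm ht2g
          hx5g hx5x1 hx5x2 hx5g
          (ne_of_mem_of_not_mem hz ht6) hzx1 hzx2 (ne_of_mem_of_not_mem hz ht6) hzt2 hzx5
      · obtain ⟨x1, hx1, hx1g⟩ := pick2 (L 1) g (by omega)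
        obtain ⟨x2, hx2, hx2g, hx2x1⟩ := pick3 (L 2) g x1 (by omega)
        obtain ⟨x5, hx5, hx5g, hx5x1, hx5x2⟩ := pick4 (L 5) g x1 x2 (by omega)
        obtain ⟨z, hz, hzg, hzx1, hzx2, hzx5⟩ := pick5 (L 6) g x1 x2 x5 (by omega)
        exact build g x1 x2 g t x5 z hg0 hx1 hx2 hg3 ht4 hx5 hz
          hx1g.symm hx2x1.symm hx2g hgt (fun h => hgt h.symm)
          hx5g hx5x1 hx5x2 hx5g
          hzg hzx1 hzx2 hzg (ne_of_mem_of_not_mem hz ht6) hzx5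
    · push_neg at B1 B2 B3
      by_cases B4a : ∃ g, g ∈ L 0 ∧ g ∉ L 6 ∧ g ∉ L 4
      · obtain ⟨g, hg0, hg6, hg4⟩ := B4a
        have htg : t ≠ g := ne_of_mem_of_not_mem ht4 hg4
        have hg5 : g ∉ L 5 := fun h => hg6 (HF g h)
        obtain ⟨x1, hx1, hx1g⟩ := pick2 (L 1) g (by omega)
        obtain ⟨x3, hx3, hx3t⟩ := pick2 (L 3) t (by omega)
        obtain ⟨x2, hx2, hx2x1, hx2x3⟩ := pick3 (L 2) x1 x3 (by omega)
        obtain ⟨x5, hx5, hx5x1, hx5x2, hx5x3⟩ := pick4 (L 5) x1 x2 x3 (by omega)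
        obtain ⟨z, hz, hzx1, hzx2, hzx3, hzx5⟩ := pick5 (L 6) x1 x2 x3 x5 (by omega)
        exact build g x1 x2 x3 t x5 z hg0 hx1 hx2 hx3 ht4 hx5 hz
          hx1g.symm hx2x1.symm hx2x3 hx3t htg
          (ne_of_mem_of_not_mem hx5 hg5) hx5x1 hx5x2 hx5x3
          (ne_of_mem_of_not_mem hz hg6) hzx1 hzx2 hzx3 (ne_of_mem_of_not_mem hz ht6) hzx5
      by_cases B4b : ∃ g, g ∈ L 1 ∧ g ∉ L 6
      · obtain ⟨g, hg1, hg6⟩ := B4b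
        have hg5 : g ∉ L 5 := fun h => hg6 (HF g h)
        obtain ⟨x3, hx3, hx3t⟩ := pick2 (L 3) t (by omega)
        have hx3g : x3 ≠ g := fun h => (B2 g hg1) (h ▸ hx3)
        obtain ⟨x2, hx2, hx2g, hx2x3⟩ := pick3 (L 2) g x3 (by omega)
        obtain ⟨x0, hx0, hx0g, hx0t⟩ := pick3 (L 0) g t (by omega)
        obtain ⟨x5, hx5, hx5x0, hx5x2, hx5x3⟩ := pick4 (L 5) x0 x2 x3 (by omega)
        obtain ⟨z, hz, hzx0, hzx2, hzx3, hzx5⟩ := pick5 (L 6) x0 x2 x3 x5 (by omega)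
        exact build x0 g x2 x3 t x5 z hx0 hg1 hx2 hx3 ht4 hx5 hz
          hx0g hx2g.symm hx2x3 hx3t hx0t.symm
          hx5x0 (ne_of_mem_of_not_mem hx5 hg5) hx5x2 hx5x3
          hzx0 (ne_of_mem_of_not_mem hz hg6) hzx2 hzx3 (ne_of_mem_of_not_mem hz ht6) hzx5
      by_cases B4c : ∃ g, g ∈ L 2 ∧ g ∉ L 6
      · obtain ⟨g, hg2, hg6⟩ := B4c
        have hg5 : g ∉ L 5 := fun h => hg6 (HF g h)
        obtain ⟨x1, hx1, hx1g⟩ := pick2 (L 1) g (by omega)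
        obtain ⟨x3, hx3, hx3g, hx3t⟩ := pick3 (L 3) g t (by omega)
        obtain ⟨x0, hx0, hx0x1, hx0t⟩ := pick3 (L 0) x1 t (by omega)
        obtain ⟨x5, hx5, hx5x0, hx5x1, hx5x3⟩ := pick4 (L 5) x0 x1 x3 (by omega)
        obtain ⟨z, hz, hzx0, hzx1, hzx3, hzx5⟩ := pick5 (L 6) x0 x1 x3 x5 (by omega)
        exact build x0 x1 g x3 t x5 z hx0 hx1 hg2 hx3 ht4 hx5 hz
          hx0x1 hx1g hx3g.symm hx3t hx0t.symm
          hx5x0 hx5x1 (ne_of_mem_of_not_mem hx5 hg5) hx5x3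
          hzx0 hzx1 (ne_of_mem_of_not_mem hz hg6) hzx3 (ne_of_mem_of_not_mem hz ht6) hzx5
      by_cases B4d : ∃ g, g ∈ L 3 ∧ g ∉ L 6 ∧ g ∉ L 4
      · obtain ⟨g, hg3, hg6, hg4⟩ := B4d
        have htg : t ≠ g := ne_of_mem_of_not_mem ht4 hg4
        have hg5 : g ∉ L 5 := fun h => hg6 (HF g h)
        obtain ⟨x2, hx2, hx2g⟩ := pick2 (L 2) g (by omega)
        obtain ⟨x1, hx1, hx1x2⟩ := pick2 (L 1) x2 (by omega)
        obtain ⟨x0, hx0, hx0x1, hx0t⟩ := pick3 (L 0) x1 t (by omega)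
        obtain ⟨x5, hx5, hx5x0, hx5x1, hx5x2⟩ := pick4 (L 5) x0 x1 x2 (by omega)
        obtain ⟨z, hz, hzx0, hzx1, hzx2, hzx5⟩ := pick5 (L 6) x0 x1 x2 x5 (by omega)
        exact build x0 x1 x2 g t x5 z hx0 hx1 hx2 hg3 ht4 hx5 hz
          hx0x1 hx1x2 hx2g htg.symm hx0t.symm
          hx5x0 hx5x1 hx5x2 (ne_of_mem_of_not_mem hx5 hg5)
          hzx0 hzx1 hzx2 (ne_of_mem_of_not_mem hz hg6) (ne_of_mem_of_not_mem hz ht6) hzx5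
      · push_neg at B4a B4b B4c B4d
        have hEx0 : ∃ x, x ∈ L 0 ∧ x ∉ L 6 := by
          by_contra h; push_neg at h
          have hdisj : Disjoint (L 0) (L 2) :=
            Finset.disjoint_left.2 fun {x} hx hx' => (B1 x hx hx').elim
          have h1 : (L 0 ∪ L 2).card = 6 := by
            rw [Finset.card_union_of_disjoint hdisj, n0, n2]
          have h2 := Finset.card_le_card
            (Finset.union_subset h (fun x hx => B4c x hx))
          omega
        have hEx3 : ∃ x, x ∈ L 3 ∧ x ∉ L 6 := by
          by_contra h; push_neg at h
          have hdisj : Disjoint (L 1) (L 3) :=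
            Finset.disjoint_left.2 fun {x} hx hx' => (B2 x hx hx').elim
          have h1 : (L 1 ∪ L 3).card = 6 := by
            rw [Finset.card_union_of_disjoint hdisj, n1, n3]
          have h2 := Finset.card_le_card
            (Finset.union_subset (fun x hx => B4b x hx) h)
          omega
        obtain ⟨t', ht'0, ht'6⟩ := hEx0
        obtain ⟨t'', ht''3, ht''6⟩ := hEx3
        have ht'4 : t' ∈ L 4 := B4a t' ht'0 ht'6
        have ht''4 : t'' ∈ L 4 := B4d t'' ht''3 ht''6
        have hne : t' ≠ t'' := fun h => B3 t' ht'0 (h ▸ ht''3)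
        have ht'5 : t' ∉ L 5 := hd t' ht'4
        have ht''5 : t'' ∉ L 5 := hd t'' ht''4
        obtain ⟨x1, hx1⟩ := pick1 (L 1) (by omega)
        obtain ⟨x2, hx2, hx2x1⟩ := pick2 (L 2) x1 (by omega)
        obtain ⟨x0, hx0, hx0t', hx0x1⟩ := pick3 (L 0) t' x1 (by omega)
        obtain ⟨x5, hx5, hx5x0, hx5x1, hx5x2⟩ := pick4 (L 5) x0 x1 x2 (by omega)
        have hx26 : x2 ∈ L 6 := B4c x2 hx2
        obtain ⟨z, hz, hzx0, hzx1, hzx2, hzx5⟩ := pick5 (L 6) x0 x1 x2 x5 (by omega)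
        exact build x0 x1 x2 t'' t' x5 z hx0 hx1 hx2 ht''3 ht'4 hx5 hz
          hx0x1 hx2x1.symm (ne_of_mem_of_not_mem hx26 ht''6) hne.symm hx0t'.symm
          hx5x0 hx5x1 hx5x2 (ne_of_mem_of_not_mem hx5 ht''5)
          hzx0 hzx1 hzx2 (ne_of_mem_of_not_mem hz ht''6) (ne_of_mem_of_not_mem hz ht'6) hzx5
lemma good_main (L : Fin 7 → Finset ℕ)
    (n0 : (L 0).card = 3) (n1 : (L 1).card = 3) (n2 : (L 2).card = 3)
    (n3 : (L 3).card = 3) (n4 : (L 4).card = 2) (n5 : (L 5).card = 4)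
    (n6 : (L 6).card = 5) : GOOD L := by
  by_cases H : ∃ x, x ∈ L 4 ∧ x ∈ L 5
  · obtain ⟨c, hc4, hc5⟩ := H
    exact case1 L n0 n1 n2 n3 n4 n5 n6 c hc4 hc5
  · push_neg at H
    by_cases HX : ∃ e, e ∈ L 1 ∧ e ∈ L 4
    · obtain ⟨e, he1, he4⟩ := HX
      exact case2X L n0 n1 n2 n3 n4 n5 n6 H e he1 he4
    by_cases HY : ∃ e, e ∈ L 2 ∧ e ∈ L 4
    · obtain ⟨e, he2, he4⟩ := HY
      exact good_mirror L (case2X (fun i => L (mir i)) n3 n2 n1 n0 n4 n5 n6 H e he2 he4)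
    · push_neg at HX HY
      exact case2Z L n0 n1 n2 n3 n4 n5 n6 H
        (fun x h1 h4 => HX x h1 h4) (fun x h2 h4 => HY x h2 h4)

/-- `K_1 * N_6` is `d_1`-choosable. -/
theorem stmt3 (L : Fin 7 → Finset ℕ) (hL : ∀ v, deg K1N6 v - 1 ≤ (L v).card) :
    ∃ c : Fin 7 → ℕ, (∀ v, c v ∈ L v) ∧ ∀ u v, K1N6.Adj u v → c u ≠ c v := by
  have hdeg : ∀ v, deg K1N6 v = ![4,4,4,4,3,5,6] v := by
    intro v
    unfold deg
    rw [Set.ncard_eq_toFinset_card']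
    revert v; decide
  have h0 : 3 ≤ (L 0).card := by have := hL 0; rw [hdeg 0] at this; exact this
  have h1 : 3 ≤ (L 1).card := by have := hL 1; rw [hdeg 1] at this; exact this
  have h2 : 3 ≤ (L 2).card := by have := hL 2; rw [hdeg 2] at this; exact this
  have h3 : 3 ≤ (L 3).card := by have := hL 3; rw [hdeg 3] at this; exact this
  have h4 : 2 ≤ (L 4).card := by have := hL 4; rw [hdeg 4] at this; exact this
  have h5 : 4 ≤ (L 5).card := by have := hL 5; rw [hdeg 5] at this; exact this
  have h6 : 5 ≤ (L 6).card := by have := hL 6; rw [hdeg 6] at this; exact this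
  obtain ⟨T0, hT0s, hT0c⟩ := Finset.exists_subset_card_eq h0
  obtain ⟨T1, hT1s, hT1c⟩ := Finset.exists_subset_card_eq h1
  obtain ⟨T2, hT2s, hT2c⟩ := Finset.exists_subset_card_eq h2
  obtain ⟨T3, hT3s, hT3c⟩ := Finset.exists_subset_card_eq h3
  obtain ⟨T4, hT4s, hT4c⟩ := Finset.exists_subset_card_eq h4
  obtain ⟨T5, hT5s, hT5c⟩ := Finset.exists_subset_card_eq h5
  obtain ⟨T6, hT6s, hT6c⟩ := Finset.exists_subset_card_eq h6
  obtain ⟨c, hm, hp⟩ := good_main ![T0, T1, T2, T3, T4, T5, T6]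
    hT0c hT1c hT2c hT3c hT4c hT5c hT6c
  refine ⟨c, fun v => ?_, hp⟩
  have := hm v
  fin_cases v
  · exact hT0s this
  · exact hT1s this
  · exact hT2s this
  · exact hT3s this
  · exact hT4s this
  · exact hT5s this
  · exact hT6s this
end

section
/- The join K_3 * P_4 of a triangle with a path on four vertices is d_1-choosable. -/
/-- The join of two graphs: disjoint union plus all edges in between. -/
def join {α β : Type*} (A : SimpleGraph α) (B : SimpleGraph β) :
    SimpleGraph (α ⊕ β) where
  Adj u v :=
    match u, v with
    | Sum.inl a, Sum.inl a' => A.Adj a a'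
    | Sum.inr b, Sum.inr b' => B.Adj b b'
    | _, _ => True
  symm := by
    constructor
    rintro (a | a) (b | b) h
    · exact A.adj_symm h
    · trivial
    · trivial
    · exact B.adj_symm h
  loopless := by
    constructor
    rintro (a | a) h
    · exact A.irrefl h
    · exact B.irrefl h

open Finset

private lemma pick_avoid (B T : Finset ℕ) (h : T.card < B.card) : ∃ b ∈ B, b ∉ T := by
  have h2 : 0 < (B \ T).card := by
    have := Finset.card_le_card_sdiff_add_card (s := B) (t := T)
    omega
  obtain ⟨b, hb⟩ := Finset.card_pos.mp h2
  rw [Finset.mem_sdiff] at hb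
  exact ⟨b, hb.1, hb.2⟩

private lemma pick_ne1 (B : Finset ℕ) (h : 1 < B.card) (t : ℕ) : ∃ b ∈ B, b ≠ t := by
  obtain ⟨b, hb, hbt⟩ := pick_avoid B {t} (by simpa using h)
  exact ⟨b, hb, by simpa using hbt⟩

private lemma pick_ne2 (B : Finset ℕ) (h : 2 < B.card) (t1 t2 : ℕ) :
    ∃ b ∈ B, b ≠ t1 ∧ b ≠ t2 := by
  obtain ⟨b, hb, hbt⟩ := pick_avoid B {t1, t2} (by
    have := Finset.card_insert_le t1 ({t2} : Finset ℕ)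
    simp only [Finset.card_singleton] at this
    omega)
  simp only [Finset.mem_insert, Finset.mem_singleton, not_or] at hbt
  exact ⟨b, hb, hbt.1, hbt.2⟩

private lemma pick_mem (B : Finset ℕ) (h : 0 < B.card) : ∃ b ∈ B, True := by
  obtain ⟨b, hb⟩ := Finset.card_pos.mp h
  exact ⟨b, hb, trivial⟩

private lemma dj {A D : Finset ℕ} (h : A ∩ D = ∅) {x y : ℕ} (hx : x ∈ A) (hy : y ∈ D) :
    x ≠ y := by
  rintro rfl
  have : x ∈ A ∩ D := Finset.mem_inter.mpr ⟨hx, hy⟩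
  rw [h] at this
  exact absurd this (Finset.notMem_empty x)

private lemma two_of {X : Finset ℕ} {c0 c1 c2 c3 : ℕ} (a b : ℕ)
    (h0 : c0 ∈ X → c0 = a ∨ c0 = b) (h1 : c1 ∈ X → c1 = a ∨ c1 = b)
    (h2 : c2 ∈ X → c2 = a ∨ c2 = b) (h3 : c3 ∈ X → c3 = a ∨ c3 = b) :
    (X ∩ {c0, c1, c2, c3}).card ≤ 2 := by
  have hsub : X ∩ {c0, c1, c2, c3} ⊆ {a, b} := by
    intro t ht
    rw [Finset.mem_inter] at ht
    obtain ⟨htX, htS⟩ := ht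
    simp only [Finset.mem_insert, Finset.mem_singleton] at htS ⊢
    rcases htS with rfl | rfl | rfl | rfl
    · exact h0 htX
    · exact h1 htX
    · exact h2 htX
    · exact h3 htX
  calc (X ∩ {c0, c1, c2, c3}).card ≤ ({a, b} : Finset ℕ).card := Finset.card_le_card hsub
    _ ≤ 2 := by
        have := Finset.card_insert_le a ({b} : Finset ℕ)
        simp only [Finset.card_singleton] at this
        omega

private lemma three_of {Y : Finset ℕ} {c0 c1 c2 c3 : ℕ} (e f g : ℕ)
    (h0 : c0 ∈ Y → c0 = e ∨ c0 = f ∨ c0 = g) (h1 : c1 ∈ Y → c1 = e ∨ c1 = f ∨ c1 = g)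
    (h2 : c2 ∈ Y → c2 = e ∨ c2 = f ∨ c2 = g) (h3 : c3 ∈ Y → c3 = e ∨ c3 = f ∨ c3 = g) :
    (Y ∩ {c0, c1, c2, c3}).card ≤ 3 := by
  have hsub : Y ∩ {c0, c1, c2, c3} ⊆ {e, f, g} := by
    intro t ht
    rw [Finset.mem_inter] at ht
    obtain ⟨htY, htS⟩ := ht
    simp only [Finset.mem_insert, Finset.mem_singleton] at htS ⊢
    rcases htS with rfl | rfl | rfl | rfl
    · exact h0 htY
    · exact h1 htY
    · exact h2 htY
    · exact h3 htY
  calc (Y ∩ {c0, c1, c2, c3}).card ≤ ({e, f, g} : Finset ℕ).card := Finset.card_le_card hsub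
    _ ≤ 3 := by
        have h1' := Finset.card_insert_le e ({f, g} : Finset ℕ)
        have h2' := Finset.card_insert_le f ({g} : Finset ℕ)
        simp only [Finset.card_singleton] at h1' h2'
        omega

private lemma too_big {Y D : Finset ℕ} {u v : ℕ} (hY : Y.card = 5) (hD : D.card = 4)
    (hDY : D ⊆ Y) (hu : u ∈ Y) (hv : v ∈ Y) (huD : u ∉ D) (hvD : v ∉ D) (huv : u ≠ v) :
    False := by
  have hsub : insert u (insert v D) ⊆ Y := by
    apply Finset.insert_subset hu
    exact Finset.insert_subset hv hDY
  have hcard : (insert u (insert v D)).card = 6 := by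
    rw [Finset.card_insert_of_notMem (by simp [huD, huv]),
      Finset.card_insert_of_notMem hvD, hD]
  have := Finset.card_le_card hsub
  omega

private lemma leaf {A B D E X Y Z : Finset ℕ} (hX : X.card = 5) (hY : Y.card = 5)
    (hZ : Z.card = 5) {c0 c1 c2 c3 : ℕ} (a b e f g : ℕ)
    (m0 : c0 ∈ A) (m1 : c1 ∈ B) (m2 : c2 ∈ D) (m3 : c3 ∈ E)
    (p01 : c0 ≠ c1) (p12 : c1 ≠ c2) (p23 : c2 ≠ c3)
    (h0 : c0 ∈ X → c0 = a ∨ c0 = b) (h1 : c1 ∈ X → c1 = a ∨ c1 = b)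
    (h2 : c2 ∈ X → c2 = a ∨ c2 = b) (h3 : c3 ∈ X → c3 = a ∨ c3 = b)
    (g0 : c0 ∈ Y → c0 = e ∨ c0 = f ∨ c0 = g) (g1 : c1 ∈ Y → c1 = e ∨ c1 = f ∨ c1 = g)
    (g2 : c2 ∈ Y → c2 = e ∨ c2 = f ∨ c2 = g) (g3 : c3 ∈ Y → c3 = e ∨ c3 = f ∨ c3 = g) :
    ∃ c0 c1 c2 c3 x y z : ℕ, c0 ∈ A ∧ c1 ∈ B ∧ c2 ∈ D ∧ c3 ∈ E ∧
      x ∈ X ∧ y ∈ Y ∧ z ∈ Z ∧ c0 ≠ c1 ∧ c1 ≠ c2 ∧ c2 ≠ c3 ∧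
      x ≠ y ∧ x ≠ z ∧ y ≠ z ∧
      (∀ s ∈ ({c0, c1, c2, c3} : Finset ℕ), x ≠ s ∧ y ≠ s ∧ z ≠ s) := by
  set S : Finset ℕ := {c0, c1, c2, c3} with hS
  have hScard : S.card ≤ 4 := by
    rw [hS]
    have i1 := Finset.card_insert_le c0 ({c1, c2, c3} : Finset ℕ)
    have i2 := Finset.card_insert_le c1 ({c2, c3} : Finset ℕ)
    have i3 := Finset.card_insert_le c2 ({c3} : Finset ℕ)
    simp only [Finset.card_singleton] at i1 i2 i3
    omega
  have hSX : (X ∩ S).card ≤ 2 := two_of a b h0 h1 h2 h3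
  have hSY : (Y ∩ S).card ≤ 3 := three_of e f g g0 g1 g2 g3
  have hSZ : (Z ∩ S).card ≤ 4 :=
    le_trans (Finset.card_le_card (Finset.inter_subset_right)) hScard
  -- pick z
  have hzne : 0 < (Z \ S).card := by
    have := Finset.card_sdiff_add_card_inter Z S
    omega
  obtain ⟨z, hz⟩ := Finset.card_pos.mp hzne
  rw [Finset.mem_sdiff] at hz
  obtain ⟨hzZ, hzS⟩ := hz
  -- pick y
  have hYi : (Y ∩ insert z S).card ≤ 4 := by
    have hsub : Y ∩ insert z S ⊆ insert z (Y ∩ S) := by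
      intro t ht
      rw [Finset.mem_inter] at ht
      rcases Finset.mem_insert.mp ht.2 with rfl | hts
      · exact Finset.mem_insert_self _ _
      · exact Finset.mem_insert_of_mem (Finset.mem_inter.mpr ⟨ht.1, hts⟩)
    have h5 := Finset.card_le_card hsub
    have h6 := Finset.card_insert_le z (Y ∩ S)
    omega
  have hyne : 0 < (Y \ insert z S).card := by
    have := Finset.card_sdiff_add_card_inter Y (insert z S)
    omega
  obtain ⟨y, hy⟩ := Finset.card_pos.mp hyne
  rw [Finset.mem_sdiff, Finset.mem_insert] at hy
  obtain ⟨hyY, hy2⟩ := hy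
  push_neg at hy2
  obtain ⟨hyz, hyS⟩ := hy2
  -- pick x
  have hXi : (X ∩ insert y (insert z S)).card ≤ 4 := by
    have hsub : X ∩ insert y (insert z S) ⊆ insert y (insert z (X ∩ S)) := by
      intro t ht
      rw [Finset.mem_inter] at ht
      rcases Finset.mem_insert.mp ht.2 with rfl | hts
      · exact Finset.mem_insert_self _ _
      rcases Finset.mem_insert.mp hts with rfl | hts2
      · exact Finset.mem_insert_of_mem (Finset.mem_insert_self _ _)
      · exact Finset.mem_insert_of_mem
          (Finset.mem_insert_of_mem (Finset.mem_inter.mpr ⟨ht.1, hts2⟩))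
    have h5 := Finset.card_le_card hsub
    have h6 := Finset.card_insert_le y (insert z (X ∩ S))
    have h7 := Finset.card_insert_le z (X ∩ S)
    omega
  have hxne : 0 < (X \ insert y (insert z S)).card := by
    have := Finset.card_sdiff_add_card_inter X (insert y (insert z S))
    omega
  obtain ⟨x, hx⟩ := Finset.card_pos.mp hxne
  rw [Finset.mem_sdiff, Finset.mem_insert, Finset.mem_insert] at hx
  obtain ⟨hxX, hx2⟩ := hx
  push_neg at hx2
  obtain ⟨hxy, hxz, hxS⟩ := hx2
  refine ⟨c0, c1, c2, c3, x, y, z, m0, m1, m2, m3, hxX, hyY, hzZ, p01, p12, p23,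
    hxy, hxz, hyz, ?_⟩
  intro s hs
  exact ⟨fun h => hxS (h ▸ hs), fun h => hyS (h ▸ hs), fun h => hzS (h ▸ hs)⟩

private lemma core (A B D E X Y Z : Finset ℕ) (hA : A.card = 3) (hB : B.card = 4)
    (hD : D.card = 4) (hE : E.card = 3) (hX : X.card = 5) (hY : Y.card = 5)
    (hZ : Z.card = 5) :
    ∃ c0 c1 c2 c3 x y z : ℕ, c0 ∈ A ∧ c1 ∈ B ∧ c2 ∈ D ∧ c3 ∈ E ∧
      x ∈ X ∧ y ∈ Y ∧ z ∈ Z ∧ c0 ≠ c1 ∧ c1 ≠ c2 ∧ c2 ≠ c3 ∧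
      x ≠ y ∧ x ≠ z ∧ y ≠ z ∧
      (∀ s ∈ ({c0, c1, c2, c3} : Finset ℕ), x ≠ s ∧ y ≠ s ∧ z ≠ s) := by
  by_cases hBE : (B ∩ E).Nonempty
  · obtain ⟨c', hc'⟩ := hBE
    rw [Finset.mem_inter] at hc'
    by_cases hADex : ∃ cc ∈ A ∩ D, cc ≠ c'
    · -- CASE 1 : two-color the path
      obtain ⟨cc, hcc, hne⟩ := hADex
      rw [Finset.mem_inter] at hcc
      exact leaf hX hY hZ cc c' cc c' c' hcc.1 hc'.1 hcc.2 hc'.2 hne (Ne.symm hne) hne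
        (fun _ => Or.inl rfl) (fun _ => Or.inr rfl) (fun _ => Or.inl rfl)
        (fun _ => Or.inr rfl)
        (fun _ => Or.inl rfl) (fun _ => Or.inr (Or.inl rfl)) (fun _ => Or.inl rfl)
        (fun _ => Or.inr (Or.inl rfl))
    · -- CASE 2 : A∩D ⊆ {c'}
      push_neg at hADex
      have hADcard : (A ∩ D).card ≤ 1 := by
        calc (A ∩ D).card ≤ ({c'} : Finset ℕ).card :=
              Finset.card_le_card (fun t ht => Finset.mem_singleton.mpr (hADex t ht))
          _ = 1 := Finset.card_singleton c'
      have hADu : 6 ≤ (A ∪ D).card := by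
        have := Finset.card_union_add_card_inter A D
        omega
      by_cases hc'X : c' ∈ X
      · obtain ⟨s, hsAD, hsX⟩ := pick_avoid (A ∪ D) X (by omega)
        have hsc' : s ≠ c' := fun h => hsX (h ▸ hc'X)
        by_cases hsA : s ∈ A
        · obtain ⟨c2, hc2D, hc2⟩ := pick_ne1 D (by omega) c'
          exact leaf hX hY hZ c' c2 s c' c2 hsA hc'.1 hc2D hc'.2 hsc' (Ne.symm hc2) hc2
            (fun h => absurd h hsX) (fun _ => Or.inl rfl) (fun _ => Or.inr rfl)
            (fun _ => Or.inl rfl)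
            (fun _ => Or.inl rfl) (fun _ => Or.inr (Or.inl rfl))
            (fun _ => Or.inr (Or.inr rfl)) (fun _ => Or.inr (Or.inl rfl))
        · have hsD : s ∈ D := (Finset.mem_union.mp hsAD).resolve_left hsA
          obtain ⟨c0, hc0A, hc0⟩ := pick_ne1 A (by omega) c'
          exact leaf hX hY hZ c0 c' c0 c' s hc0A hc'.1 hsD hc'.2 hc0 (Ne.symm hsc') hsc'
            (fun _ => Or.inl rfl) (fun _ => Or.inr rfl) (fun h => absurd h hsX)
            (fun _ => Or.inr rfl)
            (fun _ => Or.inl rfl) (fun _ => Or.inr (Or.inl rfl))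
            (fun _ => Or.inr (Or.inr rfl)) (fun _ => Or.inr (Or.inl rfl))
      · obtain ⟨c0, hc0A, hc0⟩ := pick_ne1 A (by omega) c'
        obtain ⟨c2, hc2D, hc2⟩ := pick_ne1 D (by omega) c'
        exact leaf hX hY hZ c0 c2 c0 c' c2 hc0A hc'.1 hc2D hc'.2 hc0 (Ne.symm hc2) hc2
          (fun _ => Or.inl rfl) (fun h => absurd h hc'X) (fun _ => Or.inr rfl)
          (fun h => absurd h hc'X)
          (fun _ => Or.inl rfl) (fun _ => Or.inr (Or.inl rfl))
          (fun _ => Or.inr (Or.inr rfl)) (fun _ => Or.inr (Or.inl rfl))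
  · have hBEe : B ∩ E = ∅ := Finset.not_nonempty_iff_eq_empty.mp hBE
    by_cases hADn : (A ∩ D).Nonempty
    · -- CASE 3
      obtain ⟨c, hc⟩ := hADn
      rw [Finset.mem_inter] at hc
      have hBEu : (B ∪ E).card = 7 := by
        rw [Finset.card_union_of_disjoint (Finset.disjoint_iff_inter_eq_empty.mpr hBEe)]
        omega
      by_cases hcX : c ∈ X
      · obtain ⟨s, hsBE, hsX⟩ := pick_avoid (B ∪ E) X (by omega)
        have hsc : s ≠ c := fun h => hsX (h ▸ hcX)
        rcases Finset.mem_union.mp hsBE with hsB | hsE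
        · obtain ⟨c3, hc3E, hc3⟩ := pick_ne1 E (by omega) c
          exact leaf hX hY hZ c c3 c s c3 hc.1 hsB hc.2 hc3E (Ne.symm hsc) hsc
            (Ne.symm hc3)
            (fun _ => Or.inl rfl) (fun h => absurd h hsX) (fun _ => Or.inl rfl)
            (fun _ => Or.inr rfl)
            (fun _ => Or.inl rfl) (fun _ => Or.inr (Or.inl rfl)) (fun _ => Or.inl rfl)
            (fun _ => Or.inr (Or.inr rfl))
        · obtain ⟨c1, hc1B, hc1⟩ := pick_ne1 B (by omega) c
          exact leaf hX hY hZ c c1 c c1 s hc.1 hc1B hc.2 hsE (Ne.symm hc1) hc1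
            (Ne.symm hsc)
            (fun _ => Or.inl rfl) (fun _ => Or.inr rfl) (fun _ => Or.inl rfl)
            (fun h => absurd h hsX)
            (fun _ => Or.inl rfl) (fun _ => Or.inr (Or.inl rfl)) (fun _ => Or.inl rfl)
            (fun _ => Or.inr (Or.inr rfl))
      · obtain ⟨c1, hc1B, hc1⟩ := pick_ne1 B (by omega) c
        obtain ⟨c3, hc3E, hc3⟩ := pick_ne1 E (by omega) c
        exact leaf hX hY hZ c1 c3 c c1 c3 hc.1 hc1B hc.2 hc3E (Ne.symm hc1) hc1
          (Ne.symm hc3)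
          (fun h => absurd h hcX) (fun _ => Or.inl rfl) (fun h => absurd h hcX)
          (fun _ => Or.inr rfl)
          (fun _ => Or.inl rfl) (fun _ => Or.inr (Or.inl rfl)) (fun _ => Or.inl rfl)
          (fun _ => Or.inr (Or.inr rfl))
    · have hADe : A ∩ D = ∅ := Finset.not_nonempty_iff_eq_empty.mp hADn
      by_cases hAEn : (A ∩ E).Nonempty
      · -- CASE 4
        obtain ⟨c, hc⟩ := hAEn
        rw [Finset.mem_inter] at hc
        have hcD : c ∉ D := fun h => (dj hADe hc.1 h) rfl
        by_cases hcX : c ∈ X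
        · by_cases h1e : ∃ t ∈ B, t ∉ X
          · obtain ⟨c1, hc1B, hc1X⟩ := h1e
            have hc1c : c ≠ c1 := fun h => hc1X (h ▸ hcX)
            obtain ⟨c2, hc2D, hc2⟩ := pick_ne1 D (by omega) c1
            exact leaf hX hY hZ c c2 c c1 c2 hc.1 hc1B hc2D hc.2 hc1c (Ne.symm hc2)
              (fun h => hcD (h ▸ hc2D))
              (fun _ => Or.inl rfl) (fun h => absurd h hc1X) (fun _ => Or.inr rfl)
              (fun _ => Or.inl rfl)
              (fun _ => Or.inl rfl) (fun _ => Or.inr (Or.inl rfl))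
              (fun _ => Or.inr (Or.inr rfl)) (fun _ => Or.inl rfl)
          · by_cases h2e : ∃ t ∈ D, t ∉ X
            · obtain ⟨c2, hc2D, hc2X⟩ := h2e
              obtain ⟨c1, hc1B, hc1a, hc1b⟩ := pick_ne2 B (by omega) c c2
              exact leaf hX hY hZ c c1 c c1 c2 hc.1 hc1B hc2D hc.2 (Ne.symm hc1a) hc1b
                (fun h => hcD (h ▸ hc2D))
                (fun _ => Or.inl rfl) (fun _ => Or.inr rfl) (fun h => absurd h hc2X)
                (fun _ => Or.inl rfl)
                (fun _ => Or.inl rfl) (fun _ => Or.inr (Or.inl rfl))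
                (fun _ => Or.inr (Or.inr rfl)) (fun _ => Or.inl rfl)
            · -- 4d
              push_neg at h1e h2e
              have hcB : c ∉ B := fun h => (dj hBEe h hc.2) rfl
              have hsub : insert c (B ∪ D) ⊆ X :=
                Finset.insert_subset hcX (Finset.union_subset h1e h2e)
              have hcBD : c ∉ B ∪ D := by simp [hcB, hcD]
              have hBDle : (B ∪ D).card ≤ 4 := by
                have h5 := Finset.card_le_card hsub
                rw [Finset.card_insert_of_notMem hcBD] at h5
                omega
              have hBU : B = B ∪ D :=
                Finset.eq_of_subset_of_card_le Finset.subset_union_left (by omega)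
              have hDB : D = B := by
                refine Finset.eq_of_subset_of_card_le ?_ (by omega)
                rw [hBU]
                exact Finset.subset_union_right
              have hBDc : (B ∪ D).card = 4 := by rw [← hBU, hB]
              have hXeq : X = insert c (B ∪ D) := by
                refine (Finset.eq_of_subset_of_card_le hsub ?_).symm
                rw [Finset.card_insert_of_notMem hcBD, hBDc, hX]
              have hmemX : ∀ t, t ∈ X → t = c ∨ t ∈ B := by
                intro t ht
                rw [hXeq, Finset.mem_insert, Finset.mem_union] at ht
                rcases ht with h | h | h
                · exact Or.inl h
                · exact Or.inr h
                · exact Or.inr (by rw [← hDB]; exact h)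
              have hAX : ∀ t ∈ A, t ≠ c → t ∉ X := by
                intro t htA htc htX
                rcases hmemX t htX with h | h
                · exact htc h
                · exact (dj hADe htA (by rw [hDB]; exact h)) rfl
              have hEX : ∀ t ∈ E, t ≠ c → t ∉ X := by
                intro t htE htc htX
                rcases hmemX t htX with h | h
                · exact htc h
                · exact (dj hBEe h htE) rfl
              by_cases hα : ∃ t ∈ A, t ≠ c ∧ t ∉ Y
              · obtain ⟨α, hαA, hαc, hαY⟩ := hα
                have hαX := hAX α hαA hαc
                obtain ⟨β, hβE, hβc⟩ := pick_ne1 E (by omega) c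
                have hβX := hEX β hβE hβc
                obtain ⟨c1, hc1B, -⟩ := pick_mem B (by omega)
                obtain ⟨c2, hc2D, hc2⟩ := pick_ne1 D (by omega) c1
                exact leaf hX hY hZ c1 c2 c1 c2 β hαA hc1B hc2D hβE
                  (fun h => hαX (by rw [h]; exact h1e c1 hc1B)) (Ne.symm hc2)
                  (fun h => hβX (h ▸ h2e c2 hc2D))
                  (fun h => absurd h hαX) (fun _ => Or.inl rfl) (fun _ => Or.inr rfl)
                  (fun h => absurd h hβX)
                  (fun h => absurd h hαY) (fun _ => Or.inl rfl)
                  (fun _ => Or.inr (Or.inl rfl)) (fun _ => Or.inr (Or.inr rfl))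
              · push_neg at hα
                by_cases hβ2 : ∃ t ∈ B, t ∉ Y
                · obtain ⟨c1, hc1B, hc1Y⟩ := hβ2
                  obtain ⟨α, hαA, hαc⟩ := pick_ne1 A (by omega) c
                  have hαX := hAX α hαA hαc
                  obtain ⟨β, hβE, hβc⟩ := pick_ne1 E (by omega) c
                  have hβX := hEX β hβE hβc
                  obtain ⟨c2, hc2D, hc2⟩ := pick_ne1 D (by omega) c1
                  exact leaf hX hY hZ c1 c2 α c2 β hαA hc1B hc2D hβE
                    (fun h => hαX (by rw [h]; exact h1e c1 hc1B)) (Ne.symm hc2)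
                    (fun h => hβX (h ▸ h2e c2 hc2D))
                    (fun h => absurd h hαX) (fun _ => Or.inl rfl) (fun _ => Or.inr rfl)
                    (fun h => absurd h hβX)
                    (fun _ => Or.inl rfl) (fun h => absurd h hc1Y)
                    (fun _ => Or.inr (Or.inl rfl)) (fun _ => Or.inr (Or.inr rfl))
                · push_neg at hβ2
                  obtain ⟨u, huA, huc⟩ := pick_ne1 A (by omega) c
                  obtain ⟨v, hvA, hvc, hvu⟩ := pick_ne2 A (by omega) c u
                  have huB : u ∉ B := fun h => (dj hADe huA (by rw [hDB]; exact h)) rfl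
                  have hvB : v ∉ B := fun h => (dj hADe hvA (by rw [hDB]; exact h)) rfl
                  exact absurd (too_big hY hB (fun t ht => hβ2 t ht) (hα u huA huc)
                    (hα v hvA hvc) huB hvB (Ne.symm hvu)) not_false
        · obtain ⟨c1, hc1B, hc1⟩ := pick_ne1 B (by omega) c
          obtain ⟨c2, hc2D, hc2⟩ := pick_ne1 D (by omega) c1
          exact leaf hX hY hZ c1 c2 c c1 c2 hc.1 hc1B hc2D hc.2 (Ne.symm hc1)
            (Ne.symm hc2) (fun h => hcD (h ▸ hc2D))
            (fun h => absurd h hcX) (fun _ => Or.inl rfl) (fun _ => Or.inr rfl)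
            (fun h => absurd h hcX)
            (fun _ => Or.inl rfl) (fun _ => Or.inr (Or.inl rfl))
            (fun _ => Or.inr (Or.inr rfl)) (fun _ => Or.inl rfl)
      · -- CASE 5
        have hAEe : A ∩ E = ∅ := Finset.not_nonempty_iff_eq_empty.mp hAEn
        have hADu : (A ∪ D).card = 7 := by
          rw [Finset.card_union_of_disjoint (Finset.disjoint_iff_inter_eq_empty.mpr hADe)]
          omega
        have hBEu : (B ∪ E).card = 7 := by
          rw [Finset.card_union_of_disjoint (Finset.disjoint_iff_inter_eq_empty.mpr hBEe)]
          omega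
        have hAEu : (A ∪ E).card = 6 := by
          rw [Finset.card_union_of_disjoint (Finset.disjoint_iff_inter_eq_empty.mpr hAEe)]
          omega
        have hADX : 2 ≤ ((A ∪ D) \ X).card := by
          have := Finset.card_le_card_sdiff_add_card (s := A ∪ D) (t := X)
          omega
        have hBEX : 2 ≤ ((B ∪ E) \ X).card := by
          have := Finset.card_le_card_sdiff_add_card (s := B ∪ E) (t := X)
          omega
        by_cases hD5 : ∃ p ∈ D, p ∉ X
        · obtain ⟨p, hpD, hpX⟩ := hD5
          by_cases hv5 : ∃ t ∈ B, t ∉ X ∧ t ≠ p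
          · -- combo alpha : c1 = v, c2 = p
            obtain ⟨v, hvB, hvX, hvp⟩ := hv5
            by_cases hpvY : p ∉ Y ∨ v ∉ Y
            · obtain ⟨c0, hc0A, hc0v⟩ := pick_ne1 A (by omega) v
              obtain ⟨c3, hc3E, hc3p⟩ := pick_ne1 E (by omega) p
              rcases hpvY with h | h
              · exact leaf hX hY hZ c0 c3 c0 v c3 hc0A hvB hpD hc3E hc0v hvp
                  (Ne.symm hc3p)
                  (fun _ => Or.inl rfl) (fun hh => absurd hh hvX)
                  (fun hh => absurd hh hpX) (fun _ => Or.inr rfl)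
                  (fun _ => Or.inl rfl) (fun _ => Or.inr (Or.inl rfl))
                  (fun hh => absurd hh h) (fun _ => Or.inr (Or.inr rfl))
              · exact leaf hX hY hZ c0 c3 c0 p c3 hc0A hvB hpD hc3E hc0v hvp
                  (Ne.symm hc3p)
                  (fun _ => Or.inl rfl) (fun hh => absurd hh hvX)
                  (fun hh => absurd hh hpX) (fun _ => Or.inr rfl)
                  (fun _ => Or.inl rfl) (fun hh => absurd hh h)
                  (fun _ => Or.inr (Or.inl rfl)) (fun _ => Or.inr (Or.inr rfl))
            · push_neg at hpvY
              by_cases h05 : ∃ t ∈ A, t ∉ Y ∧ t ≠ v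
              · obtain ⟨c0, hc0A, hc0Y, hc0v⟩ := h05
                obtain ⟨c3, hc3E, hc3p⟩ := pick_ne1 E (by omega) p
                exact leaf hX hY hZ c0 c3 v p c3 hc0A hvB hpD hc3E hc0v hvp
                  (Ne.symm hc3p)
                  (fun _ => Or.inl rfl) (fun hh => absurd hh hvX)
                  (fun hh => absurd hh hpX) (fun _ => Or.inr rfl)
                  (fun hh => absurd hh hc0Y) (fun _ => Or.inl rfl)
                  (fun _ => Or.inr (Or.inl rfl)) (fun _ => Or.inr (Or.inr rfl))
              · by_cases h35 : ∃ t ∈ E, t ∉ Y ∧ t ≠ p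
                · obtain ⟨c3, hc3E, hc3Y, hc3p⟩ := h35
                  obtain ⟨c0, hc0A, hc0v⟩ := pick_ne1 A (by omega) v
                  exact leaf hX hY hZ c0 c3 c0 v p hc0A hvB hpD hc3E hc0v hvp
                    (Ne.symm hc3p)
                    (fun _ => Or.inl rfl) (fun hh => absurd hh hvX)
                    (fun hh => absurd hh hpX) (fun _ => Or.inr rfl)
                    (fun _ => Or.inl rfl) (fun _ => Or.inr (Or.inl rfl))
                    (fun _ => Or.inr (Or.inr rfl)) (fun hh => absurd hh hc3Y)
                · push_neg at h05 h35
                  have hAEY : A ∪ E ⊆ Y := by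
                    intro t ht
                    by_contra htY
                    rcases Finset.mem_union.mp ht with h | h
                    · exact htY (h05 t h htY ▸ hpvY.2)
                    · exact htY (h35 t h htY ▸ hpvY.1)
                  have := Finset.card_le_card hAEY
                  omega
          · push_neg at hv5
            obtain ⟨v, hvBEX, hvp⟩ := pick_ne1 ((B ∪ E) \ X) (by omega) p
            rw [Finset.mem_sdiff] at hvBEX
            have hvX : v ∉ X := hvBEX.2
            have hvE : v ∈ E := by
              rcases Finset.mem_union.mp hvBEX.1 with h | h
              · exact absurd (hv5 v h hvX) hvp
              · exact h
            -- combo delta : c2 = p, c3 = v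
            by_cases hpvY : p ∉ Y ∨ v ∉ Y
            · obtain ⟨c1, hc1B, hc1p⟩ := pick_ne1 B (by omega) p
              obtain ⟨c0, hc0A, hc0⟩ := pick_ne1 A (by omega) c1
              rcases hpvY with h | h
              · exact leaf hX hY hZ c0 c1 c0 c1 v hc0A hc1B hpD hvE hc0 hc1p
                  (Ne.symm hvp)
                  (fun _ => Or.inl rfl) (fun _ => Or.inr rfl)
                  (fun hh => absurd hh hpX) (fun hh => absurd hh hvX)
                  (fun _ => Or.inl rfl) (fun _ => Or.inr (Or.inl rfl))
                  (fun hh => absurd hh h) (fun _ => Or.inr (Or.inr rfl))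
              · exact leaf hX hY hZ c0 c1 c0 c1 p hc0A hc1B hpD hvE hc0 hc1p
                  (Ne.symm hvp)
                  (fun _ => Or.inl rfl) (fun _ => Or.inr rfl)
                  (fun hh => absurd hh hpX) (fun hh => absurd hh hvX)
                  (fun _ => Or.inl rfl) (fun _ => Or.inr (Or.inl rfl))
                  (fun _ => Or.inr (Or.inr rfl)) (fun hh => absurd hh h)
            · push_neg at hpvY
              by_cases h15 : ∃ t ∈ B, t ∉ Y ∧ t ≠ p
              · obtain ⟨c1, hc1B, hc1Y, hc1p⟩ := h15
                obtain ⟨c0, hc0A, hc0⟩ := pick_ne1 A (by omega) c1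
                exact leaf hX hY hZ c0 c1 c0 p v hc0A hc1B hpD hvE hc0 hc1p
                  (Ne.symm hvp)
                  (fun _ => Or.inl rfl) (fun _ => Or.inr rfl)
                  (fun hh => absurd hh hpX) (fun hh => absurd hh hvX)
                  (fun _ => Or.inl rfl) (fun hh => absurd hh hc1Y)
                  (fun _ => Or.inr (Or.inl rfl)) (fun _ => Or.inr (Or.inr rfl))
              · by_cases h05 : ∃ t ∈ A, t ∉ Y
                · obtain ⟨c0, hc0A, hc0Y⟩ := h05
                  obtain ⟨c1, hc1B, hc1p, hc1c0⟩ := pick_ne2 B (by omega) p c0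
                  exact leaf hX hY hZ c0 c1 c1 p v hc0A hc1B hpD hvE (Ne.symm hc1c0)
                    hc1p (Ne.symm hvp)
                    (fun _ => Or.inl rfl) (fun _ => Or.inr rfl)
                    (fun hh => absurd hh hpX) (fun hh => absurd hh hvX)
                    (fun hh => absurd hh hc0Y) (fun _ => Or.inl rfl)
                    (fun _ => Or.inr (Or.inl rfl)) (fun _ => Or.inr (Or.inr rfl))
                · -- deep else
                  push_neg at h15 h05
                  have hBY : B ⊆ Y := by
                    intro t ht
                    by_contra htY
                    exact htY (h15 t ht htY ▸ hpvY.1)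
                  have hvA : v ∉ A := fun h => (dj hAEe h hvE) rfl
                  have hvB : v ∉ B := fun h => (dj hBEe h hvE) rfl
                  have hvAB : v ∉ A ∪ B := by simp [hvA, hvB]
                  have hsubY : insert v (A ∪ B) ⊆ Y :=
                    Finset.insert_subset hpvY.2 (Finset.union_subset h05 hBY)
                  have hABle : (A ∪ B).card ≤ 4 := by
                    have h5 := Finset.card_le_card hsubY
                    rw [Finset.card_insert_of_notMem hvAB] at h5
                    omega
                  have hABc : (A ∪ B).card = 4 :=
                    le_antisymm hABle (hB ▸ Finset.card_le_card Finset.subset_union_right)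
                  have hBU : B = A ∪ B :=
                    Finset.eq_of_subset_of_card_le Finset.subset_union_right (by omega)
                  have hAB : A ⊆ B := by rw [hBU]; exact Finset.subset_union_left
                  have hYeq : Y = insert v (A ∪ B) :=
                    (Finset.eq_of_subset_of_card_le hsubY
                      (by rw [Finset.card_insert_of_notMem hvAB, hABc, hY])).symm
                  have hAX5 : A ⊆ X := by
                    intro t htA
                    by_contra htX
                    exact (dj hADe htA hpD) (hv5 t (hAB htA) htX)
                  have hDX2 : 2 ≤ (D \ X).card := by
                    refine le_trans hADX (Finset.card_le_card ?_)
                    intro t ht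
                    rw [Finset.mem_sdiff] at ht ⊢
                    rcases Finset.mem_union.mp ht.1 with h | h
                    · exact absurd (hAX5 h) ht.2
                    · exact ⟨h, ht.2⟩
                  obtain ⟨p', hp'DX, hp'p⟩ := pick_ne1 (D \ X) (by omega) p
                  rw [Finset.mem_sdiff] at hp'DX
                  obtain ⟨c3, hc3E, hc3v, hc3p'⟩ := pick_ne2 E (by omega) v p'
                  have hc3Y : c3 ∉ Y := by
                    intro h
                    rw [hYeq, Finset.mem_insert, Finset.mem_union] at h
                    rcases h with h | h | h
                    · exact hc3v h
                    · exact (dj hAEe h hc3E) rfl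
                    · exact (dj hBEe h hc3E) rfl
                  have hpB : p ∈ B := by
                    have hpY := hpvY.1
                    rw [hYeq, Finset.mem_insert, Finset.mem_union] at hpY
                    rcases hpY with h | h | h
                    · exact absurd h.symm hvp
                    · exact absurd ((dj hADe h hpD) rfl) not_false
                    · exact h
                  obtain ⟨c0, hc0A, -⟩ := pick_mem A (by omega)
                  exact leaf hX hY hZ c0 c3 c0 p p' hc0A hpB hp'DX.1 hc3E
                    (dj hADe hc0A hpD) (Ne.symm hp'p) (Ne.symm hc3p')
                    (fun _ => Or.inl rfl) (fun hh => absurd hh hpX)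
                    (fun hh => absurd hh hp'DX.2) (fun _ => Or.inr rfl)
                    (fun _ => Or.inl rfl) (fun _ => Or.inr (Or.inl rfl))
                    (fun _ => Or.inr (Or.inr rfl)) (fun hh => absurd hh hc3Y)
        · -- D ⊆ X
          push_neg at hD5
          have hAX2 : 2 ≤ (A \ X).card := by
            refine le_trans hADX (Finset.card_le_card ?_)
            intro t ht
            rw [Finset.mem_sdiff] at ht ⊢
            rcases Finset.mem_union.mp ht.1 with h | h
            · exact ⟨h, ht.2⟩
            · exact absurd (hD5 t h) ht.2
          by_cases hB5 : ∃ t ∈ B, t ∉ X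
          · -- combo beta : c0 = u, c1 = v
            obtain ⟨v, hvB, hvX⟩ := hB5
            obtain ⟨u, huAX, huv⟩ := pick_ne1 (A \ X) (by omega) v
            rw [Finset.mem_sdiff] at huAX
            have hvD : v ∉ D := fun h => hvX (hD5 v h)
            by_cases hpvY : u ∉ Y ∨ v ∉ Y
            · obtain ⟨c2, hc2D, hc2v⟩ := pick_ne1 D (by omega) v
              obtain ⟨c3, hc3E, hc3⟩ := pick_ne1 E (by omega) c2
              rcases hpvY with h | h
              · exact leaf hX hY hZ c2 c3 v c2 c3 huAX.1 hvB hc2D hc3E huv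
                  (Ne.symm hc2v) (Ne.symm hc3)
                  (fun hh => absurd hh huAX.2) (fun hh => absurd hh hvX)
                  (fun _ => Or.inl rfl) (fun _ => Or.inr rfl)
                  (fun hh => absurd hh h) (fun _ => Or.inl rfl)
                  (fun _ => Or.inr (Or.inl rfl)) (fun _ => Or.inr (Or.inr rfl))
              · exact leaf hX hY hZ c2 c3 u c2 c3 huAX.1 hvB hc2D hc3E huv
                  (Ne.symm hc2v) (Ne.symm hc3)
                  (fun hh => absurd hh huAX.2) (fun hh => absurd hh hvX)
                  (fun _ => Or.inl rfl) (fun _ => Or.inr rfl)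
                  (fun _ => Or.inl rfl) (fun hh => absurd hh h)
                  (fun _ => Or.inr (Or.inl rfl)) (fun _ => Or.inr (Or.inr rfl))
            · push_neg at hpvY
              by_cases h25 : ∃ t ∈ D, t ∉ Y
              · obtain ⟨c2, hc2D, hc2Y⟩ := h25
                have hc2v : c2 ≠ v := fun h => hvD (h ▸ hc2D)
                obtain ⟨c3, hc3E, hc3⟩ := pick_ne1 E (by omega) c2
                exact leaf hX hY hZ c2 c3 u v c3 huAX.1 hvB hc2D hc3E huv
                  (Ne.symm hc2v) (Ne.symm hc3)
                  (fun hh => absurd hh huAX.2) (fun hh => absurd hh hvX)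
                  (fun _ => Or.inl rfl) (fun _ => Or.inr rfl)
                  (fun _ => Or.inl rfl) (fun _ => Or.inr (Or.inl rfl))
                  (fun hh => absurd hh hc2Y) (fun _ => Or.inr (Or.inr rfl))
              · by_cases h35 : ∃ t ∈ E, t ∉ Y
                · obtain ⟨c3, hc3E, hc3Y⟩ := h35
                  obtain ⟨c2, hc2D, hc2v, hc2c3⟩ := pick_ne2 D (by omega) v c3
                  exact leaf hX hY hZ c2 c3 u v c2 huAX.1 hvB hc2D hc3E huv
                    (Ne.symm hc2v) hc2c3
                    (fun hh => absurd hh huAX.2) (fun hh => absurd hh hvX)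
                    (fun _ => Or.inl rfl) (fun _ => Or.inr rfl)
                    (fun _ => Or.inl rfl) (fun _ => Or.inr (Or.inl rfl))
                    (fun _ => Or.inr (Or.inr rfl)) (fun hh => absurd hh hc3Y)
                · push_neg at h25
                  have huD : u ∉ D := fun h => huAX.2 (hD5 u h)
                  exact absurd (too_big hY hD (fun t ht => h25 t ht) hpvY.1 hpvY.2
                    huD hvD huv) not_false
          · push_neg at hB5
            obtain ⟨v, hvBEX, -⟩ := pick_mem ((B ∪ E) \ X) (by omega)
            rw [Finset.mem_sdiff] at hvBEX
            have hvX := hvBEX.2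
            have hvE : v ∈ E := by
              rcases Finset.mem_union.mp hvBEX.1 with h | h
              · exact absurd (hB5 v h) hvX
              · exact h
            obtain ⟨u, huAX, -⟩ := pick_mem (A \ X) (by omega)
            rw [Finset.mem_sdiff] at huAX
            have huv : u ≠ v := dj hAEe huAX.1 hvE
            have hvD : v ∉ D := fun h => hvX (hD5 v h)
            have huD : u ∉ D := fun h => (dj hADe huAX.1 h) rfl
            -- combo gamma : c0 = u, c3 = v
            by_cases hpvY : u ∉ Y ∨ v ∉ Y
            · obtain ⟨c1, hc1B, hc1u⟩ := pick_ne1 B (by omega) u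
              obtain ⟨c2, hc2D, hc2c1⟩ := pick_ne1 D (by omega) c1
              rcases hpvY with h | h
              · exact leaf hX hY hZ c1 c2 c1 c2 v huAX.1 hc1B hc2D hvE (Ne.symm hc1u)
                  (Ne.symm hc2c1) (fun hh => hvD (hh ▸ hc2D))
                  (fun hh => absurd hh huAX.2) (fun _ => Or.inl rfl)
                  (fun _ => Or.inr rfl) (fun hh => absurd hh hvX)
                  (fun hh => absurd hh h) (fun _ => Or.inl rfl)
                  (fun _ => Or.inr (Or.inl rfl)) (fun _ => Or.inr (Or.inr rfl))
              · exact leaf hX hY hZ c1 c2 u c1 c2 huAX.1 hc1B hc2D hvE (Ne.symm hc1u)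
                  (Ne.symm hc2c1) (fun hh => hvD (hh ▸ hc2D))
                  (fun hh => absurd hh huAX.2) (fun _ => Or.inl rfl)
                  (fun _ => Or.inr rfl) (fun hh => absurd hh hvX)
                  (fun _ => Or.inl rfl) (fun _ => Or.inr (Or.inl rfl))
                  (fun _ => Or.inr (Or.inr rfl)) (fun hh => absurd hh h)
            · push_neg at hpvY
              by_cases h15 : ∃ t ∈ B, t ∉ Y ∧ t ≠ u
              · obtain ⟨c1, hc1B, hc1Y, hc1u⟩ := h15
                obtain ⟨c2, hc2D, hc2c1⟩ := pick_ne1 D (by omega) c1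
                exact leaf hX hY hZ c1 c2 u c2 v huAX.1 hc1B hc2D hvE (Ne.symm hc1u)
                  (Ne.symm hc2c1) (fun hh => hvD (hh ▸ hc2D))
                  (fun hh => absurd hh huAX.2) (fun _ => Or.inl rfl)
                  (fun _ => Or.inr rfl) (fun hh => absurd hh hvX)
                  (fun _ => Or.inl rfl) (fun hh => absurd hh hc1Y)
                  (fun _ => Or.inr (Or.inl rfl)) (fun _ => Or.inr (Or.inr rfl))
              · by_cases h25 : ∃ t ∈ D, t ∉ Y
                · obtain ⟨c2, hc2D, hc2Y⟩ := h25
                  obtain ⟨c1, hc1B, hc1u, hc1c2⟩ := pick_ne2 B (by omega) u c2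
                  exact leaf hX hY hZ c1 c2 u c1 v huAX.1 hc1B hc2D hvE (Ne.symm hc1u)
                    hc1c2 (fun hh => hvD (hh ▸ hc2D))
                    (fun hh => absurd hh huAX.2) (fun _ => Or.inl rfl)
                    (fun _ => Or.inr rfl) (fun hh => absurd hh hvX)
                    (fun _ => Or.inl rfl) (fun _ => Or.inr (Or.inl rfl))
                    (fun hh => absurd hh hc2Y) (fun _ => Or.inr (Or.inr rfl))
                · push_neg at h25
                  exact absurd (too_big hY hD (fun t ht => h25 t ht) hpvY.1 hpvY.2
                    huD hvD huv) not_false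

private lemma ncard_ge {V : Type*} [Finite V] (G : SimpleGraph V) (v : V) (N : Finset V)
    (h : ∀ w ∈ N, G.Adj v w) : N.card ≤ deg G v := by
  have hsub : (↑N : Set V) ⊆ G.neighborSet v := by
    intro w hw
    exact h w (by exact_mod_cast hw)
  have h2 := Set.ncard_le_ncard hsub (Set.toFinite _)
  rw [Set.ncard_coe_finset] at h2
  exact h2


/-- `K_3 * P_4` is `d_1`-choosable. -/
theorem stmt16 (L : Fin 3 ⊕ Fin 4 → Finset ℕ)
    (hL : ∀ v, deg (join (⊤ : SimpleGraph (Fin 3)) (SimpleGraph.pathGraph 4)) v - 1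
      ≤ (L v).card) :
    ∃ c : Fin 3 ⊕ Fin 4 → ℕ, (∀ v, c v ∈ L v) ∧
      ∀ u v, (join (⊤ : SimpleGraph (Fin 3)) (SimpleGraph.pathGraph 4)).Adj u v →
        c u ≠ c v := by
  set G : SimpleGraph (Fin 3 ⊕ Fin 4) :=
    join (⊤ : SimpleGraph (Fin 3)) (SimpleGraph.pathGraph 4) with hG
  -- degree lower bounds
  have pg : ∀ a b : Fin 4, (a:ℕ) + 1 = b ∨ (b:ℕ) + 1 = a → G.Adj (Sum.inr a) (Sum.inr b) :=
    fun a b h => SimpleGraph.pathGraph_adj.mpr h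
  have dl0 : 6 ≤ deg G (Sum.inl 0) := by
    refine (ncard_ge G (Sum.inl 0)
      ({Sum.inl 1, Sum.inl 2, Sum.inr 0, Sum.inr 1, Sum.inr 2, Sum.inr 3}
        : Finset (Fin 3 ⊕ Fin 4)) ?_).trans_eq' (by decide)
    intro w hw
    fin_cases hw
    · exact (SimpleGraph.top_adj _ _).mpr (by decide)
    · exact (SimpleGraph.top_adj _ _).mpr (by decide)
    · trivial
    · trivial
    · trivial
    · trivial
  have dl1 : 6 ≤ deg G (Sum.inl 1) := by
    refine (ncard_ge G (Sum.inl 1)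
      ({Sum.inl 0, Sum.inl 2, Sum.inr 0, Sum.inr 1, Sum.inr 2, Sum.inr 3}
        : Finset (Fin 3 ⊕ Fin 4)) ?_).trans_eq' (by decide)
    intro w hw
    fin_cases hw
    · exact (SimpleGraph.top_adj _ _).mpr (by decide)
    · exact (SimpleGraph.top_adj _ _).mpr (by decide)
    · trivial
    · trivial
    · trivial
    · trivial
  have dl2 : 6 ≤ deg G (Sum.inl 2) := by
    refine (ncard_ge G (Sum.inl 2)
      ({Sum.inl 0, Sum.inl 1, Sum.inr 0, Sum.inr 1, Sum.inr 2, Sum.inr 3}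
        : Finset (Fin 3 ⊕ Fin 4)) ?_).trans_eq' (by decide)
    intro w hw
    fin_cases hw
    · exact (SimpleGraph.top_adj _ _).mpr (by decide)
    · exact (SimpleGraph.top_adj _ _).mpr (by decide)
    · trivial
    · trivial
    · trivial
    · trivial
  have dr0 : 4 ≤ deg G (Sum.inr 0) := by
    refine (ncard_ge G (Sum.inr 0)
      ({Sum.inl 0, Sum.inl 1, Sum.inl 2, Sum.inr 1} : Finset (Fin 3 ⊕ Fin 4)) ?_).trans_eq'
      (by decide)
    intro w hw
    fin_cases hw
    · trivial
    · trivial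
    · trivial
    · exact SimpleGraph.pathGraph_adj.mpr (by decide)
  have dr1 : 5 ≤ deg G (Sum.inr 1) := by
    refine (ncard_ge G (Sum.inr 1)
      ({Sum.inl 0, Sum.inl 1, Sum.inl 2, Sum.inr 0, Sum.inr 2} : Finset (Fin 3 ⊕ Fin 4))
      ?_).trans_eq' (by decide)
    intro w hw
    fin_cases hw
    · trivial
    · trivial
    · trivial
    · exact SimpleGraph.pathGraph_adj.mpr (by decide)
    · exact SimpleGraph.pathGraph_adj.mpr (by decide)
  have dr2 : 5 ≤ deg G (Sum.inr 2) := by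
    refine (ncard_ge G (Sum.inr 2)
      ({Sum.inl 0, Sum.inl 1, Sum.inl 2, Sum.inr 1, Sum.inr 3} : Finset (Fin 3 ⊕ Fin 4))
      ?_).trans_eq' (by decide)
    intro w hw
    fin_cases hw
    · trivial
    · trivial
    · trivial
    · exact SimpleGraph.pathGraph_adj.mpr (by decide)
    · exact SimpleGraph.pathGraph_adj.mpr (by decide)
  have dr3 : 4 ≤ deg G (Sum.inr 3) := by
    refine (ncard_ge G (Sum.inr 3)
      ({Sum.inl 0, Sum.inl 1, Sum.inl 2, Sum.inr 2} : Finset (Fin 3 ⊕ Fin 4)) ?_).trans_eq'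
      (by decide)
    intro w hw
    fin_cases hw
    · trivial
    · trivial
    · trivial
    · exact SimpleGraph.pathGraph_adj.mpr (by decide)
  -- list size lower bounds
  have hA3 : 3 ≤ (L (Sum.inr 0)).card := by have := hL (Sum.inr 0); omega
  have hB4 : 4 ≤ (L (Sum.inr 1)).card := by have := hL (Sum.inr 1); omega
  have hD4 : 4 ≤ (L (Sum.inr 2)).card := by have := hL (Sum.inr 2); omega
  have hE3 : 3 ≤ (L (Sum.inr 3)).card := by have := hL (Sum.inr 3); omega
  have hX5 : 5 ≤ (L (Sum.inl 0)).card := by have := hL (Sum.inl 0); have := dl0; omega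
  have hY5 : 5 ≤ (L (Sum.inl 1)).card := by have := hL (Sum.inl 1); have := dl1; omega
  have hZ5 : 5 ≤ (L (Sum.inl 2)).card := by have := hL (Sum.inl 2); have := dl2; omega
  -- trim the lists
  obtain ⟨A, hAs, hAc⟩ := Finset.exists_subset_card_eq hA3
  obtain ⟨B, hBs, hBc⟩ := Finset.exists_subset_card_eq hB4
  obtain ⟨D, hDs, hDc⟩ := Finset.exists_subset_card_eq hD4
  obtain ⟨E, hEs, hEc⟩ := Finset.exists_subset_card_eq hE3
  obtain ⟨X, hXs, hXc⟩ := Finset.exists_subset_card_eq hX5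
  obtain ⟨Y, hYs, hYc⟩ := Finset.exists_subset_card_eq hY5
  obtain ⟨Z, hZs, hZc⟩ := Finset.exists_subset_card_eq hZ5
  obtain ⟨c0, c1, c2, c3, x, y, z, hc0A, hc1B, hc2D, hc3E, hxX, hyY, hzZ,
    hp01, hp12, hp23, hxy, hxz, hyz, hkey⟩ :=
    core A B D E X Y Z hAc hBc hDc hEc hXc hYc hZc
  have kx0 : x ≠ c0 := (hkey c0 (by simp)).1
  have kx1 : x ≠ c1 := (hkey c1 (by simp)).1
  have kx2 : x ≠ c2 := (hkey c2 (by simp)).1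
  have kx3 : x ≠ c3 := (hkey c3 (by simp)).1
  have ky0 : y ≠ c0 := (hkey c0 (by simp)).2.1
  have ky1 : y ≠ c1 := (hkey c1 (by simp)).2.1
  have ky2 : y ≠ c2 := (hkey c2 (by simp)).2.1
  have ky3 : y ≠ c3 := (hkey c3 (by simp)).2.1
  have kz0 : z ≠ c0 := (hkey c0 (by simp)).2.2
  have kz1 : z ≠ c1 := (hkey c1 (by simp)).2.2
  have kz2 : z ≠ c2 := (hkey c2 (by simp)).2.2
  have kz3 : z ≠ c3 := (hkey c3 (by simp)).2.2
  refine ⟨fun v => match v with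
    | Sum.inl i => if i.val = 0 then x else if i.val = 1 then y else z
    | Sum.inr i => if i.val = 0 then c0 else if i.val = 1 then c1 else
        if i.val = 2 then c2 else c3, ?_, ?_⟩
  · rintro (i | i) <;> fin_cases i
    · exact hXs hxX
    · exact hYs hyY
    · exact hZs hzZ
    · exact hAs hc0A
    · exact hBs hc1B
    · exact hDs hc2D
    · exact hEs hc3E
  · rintro (i | i) (j | j) huv
    · fin_cases i <;> fin_cases j
      · exact absurd rfl huv
      · exact hxy
      · exact hxz
      · exact Ne.symm hxy
      · exact absurd rfl huv
      · exact hyz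
      · exact Ne.symm hxz
      · exact Ne.symm hyz
      · exact absurd rfl huv
    · fin_cases i <;> fin_cases j
      · exact kx0
      · exact kx1
      · exact kx2
      · exact kx3
      · exact ky0
      · exact ky1
      · exact ky2
      · exact ky3
      · exact kz0
      · exact kz1
      · exact kz2
      · exact kz3
    · fin_cases i <;> fin_cases j
      · exact Ne.symm kx0
      · exact Ne.symm ky0
      · exact Ne.symm kz0
      · exact Ne.symm kx1
      · exact Ne.symm ky1
      · exact Ne.symm kz1
      · exact Ne.symm kx2
      · exact Ne.symm ky2
      · exact Ne.symm kz2
      · exact Ne.symm kx3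
      · exact Ne.symm ky3
      · exact Ne.symm kz3
    · fin_cases i <;> fin_cases j
      · exact absurd (SimpleGraph.pathGraph_adj.mp huv) (by decide)
      · exact hp01
      · exact absurd (SimpleGraph.pathGraph_adj.mp huv) (by decide)
      · exact absurd (SimpleGraph.pathGraph_adj.mp huv) (by decide)
      · exact Ne.symm hp01
      · exact absurd (SimpleGraph.pathGraph_adj.mp huv) (by decide)
      · exact hp12
      · exact absurd (SimpleGraph.pathGraph_adj.mp huv) (by decide)
      · exact absurd (SimpleGraph.pathGraph_adj.mp huv) (by decide)
      · exact Ne.symm hp12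
      · exact absurd (SimpleGraph.pathGraph_adj.mp huv) (by decide)
      · exact hp23
      · exact absurd (SimpleGraph.pathGraph_adj.mp huv) (by decide)
      · exact absurd (SimpleGraph.pathGraph_adj.mp huv) (by decide)
      · exact Ne.symm hp23
      · exact absurd (SimpleGraph.pathGraph_adj.mp huv) (by decide)
end
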